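/- arXiv:math/0311516 — 5 statements merged into one kernel-verified Lean document; each statement's English description precedes it below -/
import Mathlib

section
/- Let m, n, k, ℓ be positive integers with √m + √n = √k + √ℓ and {m,n} ≠ {k,ℓ}. Then there exist a squarefree positive integer h and positive integers α, β, γ, δ with α + β = γ + δ such that m = α²h, n = β²h, k = γ²h, ℓ = δ²h. -/
private lemma aux_isSquare_of_sq_mul {a x : ℕ} (ha : a ≠ 0) (h : IsSquare (a ^ 2 * x)) :
    IsSquare x := by
  obtain ⟨s, hs⟩ := h
  have hs' : a ^ 2 * x = s ^ 2 := by rw [hs]; ring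
  have hdvd : a ∣ s := by
    refine (Nat.pow_dvd_pow_iff two_ne_zero).mp ⟨x, hs'.symm⟩
  obtain ⟨t, ht⟩ := hdvd
  refine ⟨t, ?_⟩
  have h2 : a ^ 2 * x = a ^ 2 * (t * t) := by rw [hs', ht]; ring
  exact Nat.eq_of_mul_eq_mul_left (by positivity) h2

private lemma aux_sqf_eq {a b : ℕ} (ha : Squarefree a) (hb : Squarefree b)
    (hs : IsSquare (a * b)) : a = b := by
  have ha0 : a ≠ 0 := ha.ne_zero
  have hb0 : b ≠ 0 := hb.ne_zero
  refine Nat.factorization_inj (Set.mem_setOf.mpr ha0) (Set.mem_setOf.mpr hb0) ?_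
  ext p
  obtain ⟨s, hsq⟩ := hs
  have heven : Even ((a * b).factorization p) := by
    rw [hsq, show s * s = s ^ 2 from (sq s).symm, Nat.factorization_pow]
    exact ⟨s.factorization p, by simp [two_mul]⟩
  rw [Nat.factorization_mul ha0 hb0, Finsupp.add_apply] at heven
  have h1 := (Nat.squarefree_iff_factorization_le_one ha0).mp ha p
  have h2 := (Nat.squarefree_iff_factorization_le_one hb0).mp hb p
  obtain ⟨r, hr⟩ := heven
  omega

theorem sqrt_sum_eq_classification (m n k l : ℕ)
    (hm : 0 < m) (hn : 0 < n) (hk : 0 < k) (hl : 0 < l)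
    (heq : Real.sqrt m + Real.sqrt n = Real.sqrt k + Real.sqrt l)
    (hne : ¬((m, n) = (k, l) ∨ (m, n) = (l, k))) :
    ∃ h α β γ δ : ℕ, 0 < h ∧ Squarefree h ∧ 0 < α ∧ 0 < β ∧ 0 < γ ∧ 0 < δ ∧
      α + β = γ + δ ∧ m = α ^ 2 * h ∧ n = β ^ 2 * h ∧ k = γ ^ 2 * h ∧ l = δ ^ 2 * h := by
  -- squared equation
  have key : (m : ℝ) + n + 2 * Real.sqrt ((m * n : ℕ)) =
      (k : ℝ) + l + 2 * Real.sqrt ((k * l : ℕ)) := by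
    have h1 := congrArg (· ^ 2) heq
    simp only [add_pow_two] at h1
    rw [Real.sq_sqrt (by positivity), Real.sq_sqrt (by positivity),
      Real.sq_sqrt (by positivity), Real.sq_sqrt (by positivity)] at h1
    push_cast
    rw [Real.sqrt_mul (by positivity), Real.sqrt_mul (by positivity)]
    linarith
  -- case m*n = k*l leads to contradiction
  by_cases hcase : m * n = k * l
  · exfalso
    have hsq : Real.sqrt ((m * n : ℕ)) = Real.sqrt ((k * l : ℕ)) := by rw [hcase]
    have hsum : m + n = k + l := by
      have : ((m + n : ℕ) : ℝ) = ((k + l : ℕ) : ℝ) := by push_cast; linarith [key, hsq]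
      exact_mod_cast this
    have e1 : (m : ℤ) + n = k + l := by exact_mod_cast hsum
    have e2 : (m : ℤ) * n = k * l := by exact_mod_cast hcase
    have hz : ((m : ℤ) - k) * ((m : ℤ) - l) = 0 := by linear_combination (m : ℤ) * e1 - e2
    simp only [Prod.mk.injEq, not_or, not_and] at hne
    rcases mul_eq_zero.mp hz with h' | h'
    · have hmk : m = k := by omega
      exact hne.1 hmk (by omega)
    · have hml : m = l := by omega
      exact hne.2 hml (by omega)
  -- otherwise both m*n and k*l are squares
  · -- the difference of the two big roots is rational
    set q : ℚ := ((k : ℚ) + l - m - n) / 2 with hq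
    have hdiff : Real.sqrt ((m * n : ℕ)) - Real.sqrt ((k * l : ℕ)) = (q : ℝ) := by
      have hqr : (q : ℝ) = ((k : ℝ) + l - m - n) / 2 := by rw [hq]; push_cast; ring
      rw [hqr]; linarith
    have hq0 : q ≠ 0 := by
      intro h0
      apply hcase
      have : Real.sqrt ((m * n : ℕ)) = Real.sqrt ((k * l : ℕ)) := by
        rw [h0, Rat.cast_zero] at hdiff; linarith
      have := (Real.sqrt_inj (by positivity) (by positivity)).mp this
      exact_mod_cast this
    -- k*l is a square
    have hkl : IsSquare (k * l) := by
      by_contra hks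
      have hirr : Irrational (Real.sqrt ((k * l : ℕ))) := irrational_sqrt_natCast_iff.mpr hks
      have : Real.sqrt ((k * l : ℕ)) =
          (((((m * n : ℕ) : ℚ) - ((k * l : ℕ) : ℚ) - q ^ 2) / (2 * q) : ℚ) : ℝ) := by
        have hr : Real.sqrt ((m * n : ℕ)) = Real.sqrt ((k * l : ℕ)) + (q : ℝ) := by
          linarith [hdiff]
        have hsq : ((m * n : ℕ) : ℝ) = ((k * l : ℕ) : ℝ) + 2 * (q : ℝ) * Real.sqrt ((k * l : ℕ)) + (q : ℝ) ^ 2 := by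
          have := congrArg (· ^ 2) hr
          simp only [add_pow_two] at this
          rw [Real.sq_sqrt (by positivity), Real.sq_sqrt (by positivity)] at this
          linarith
        have hq0' : (q : ℝ) ≠ 0 := by exact_mod_cast hq0
        have hcast : (((((m * n : ℕ) : ℚ) - ((k * l : ℕ) : ℚ) - q ^ 2) / (2 * q) : ℚ) : ℝ) =
            (((m * n : ℕ) : ℝ) - ((k * l : ℕ) : ℝ) - (q : ℝ) ^ 2) / (2 * (q : ℝ)) := by
          push_cast; ring
        rw [hcast, eq_div_iff (by exact mul_ne_zero two_ne_zero hq0')]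
        linarith
      exact hirr ⟨_, this.symm⟩
    have hmn : IsSquare (m * n) := by
      by_contra hms
      have hirr : Irrational (Real.sqrt ((m * n : ℕ))) := irrational_sqrt_natCast_iff.mpr hms
      obtain ⟨s, hs⟩ := hkl
      have hsr : Real.sqrt ((k * l : ℕ)) = (s : ℝ) := by
        rw [hs]; push_cast; rw [show (s : ℝ) * s = (s:ℝ)^2 by ring, Real.sqrt_sq (by positivity)]
      have : Real.sqrt ((m * n : ℕ)) = (((s : ℚ) + q : ℚ) : ℝ) := by
        have hcast : (((s : ℚ) + q : ℚ) : ℝ) = (s : ℝ) + (q : ℝ) := by push_cast; ring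
        rw [hcast, ← hsr]; linarith [hdiff]
      exact hirr ⟨_, this.symm⟩
    -- squarefree decompositions
    obtain ⟨h₁, α, hα, hsf₁⟩ := Nat.sq_mul_squarefree m
    obtain ⟨h₂, β, hβ, hsf₂⟩ := Nat.sq_mul_squarefree n
    obtain ⟨h₃, γ, hγ, hsf₃⟩ := Nat.sq_mul_squarefree k
    obtain ⟨h₄, δ, hδ, hsf₄⟩ := Nat.sq_mul_squarefree l
    have hα0 : α ≠ 0 := by rintro rfl; simp at hα; omega
    have hβ0 : β ≠ 0 := by rintro rfl; simp at hβ; omega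
    have hγ0 : γ ≠ 0 := by rintro rfl; simp at hγ; omega
    have hδ0 : δ ≠ 0 := by rintro rfl; simp at hδ; omega
    have h12 : h₁ = h₂ := by
      refine aux_sqf_eq hsf₁ hsf₂ (aux_isSquare_of_sq_mul (a := α * β) (by positivity) ?_)
      have : (α * β) ^ 2 * (h₁ * h₂) = m * n := by rw [← hα, ← hβ]; ring
      rw [this]; exact hmn
    have h34 : h₃ = h₄ := by
      refine aux_sqf_eq hsf₃ hsf₄ (aux_isSquare_of_sq_mul (a := γ * δ) (by positivity) ?_)
      have : (γ * δ) ^ 2 * (h₃ * h₄) = k * l := by rw [← hγ, ← hδ]; ring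
      rw [this]; exact hkl
    subst h12
    subst h34
    have hh₁0 : h₁ ≠ 0 := hsf₁.ne_zero
    have hh₃0 : h₃ ≠ 0 := hsf₃.ne_zero
    -- real equation collapses
    have hsm : Real.sqrt m = (α : ℝ) * Real.sqrt h₁ := by
      rw [← hα]; push_cast
      rw [Real.sqrt_mul (by positivity), Real.sqrt_sq (by positivity)]
    have hsn : Real.sqrt n = (β : ℝ) * Real.sqrt h₁ := by
      rw [← hβ]; push_cast
      rw [Real.sqrt_mul (by positivity), Real.sqrt_sq (by positivity)]
    have hsk : Real.sqrt k = (γ : ℝ) * Real.sqrt h₃ := by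
      rw [← hγ]; push_cast
      rw [Real.sqrt_mul (by positivity), Real.sqrt_sq (by positivity)]
    have hsl : Real.sqrt l = (δ : ℝ) * Real.sqrt h₃ := by
      rw [← hδ]; push_cast
      rw [Real.sqrt_mul (by positivity), Real.sqrt_sq (by positivity)]
    rw [hsm, hsn, hsk, hsl] at heq
    have heqr : ((α : ℝ) + β) * Real.sqrt h₁ = ((γ : ℝ) + δ) * Real.sqrt h₃ := by ring_nf; ring_nf at heq; linarith
    have heqn : (α + β) ^ 2 * h₁ = (γ + δ) ^ 2 * h₃ := by
      have := congrArg (· ^ 2) heqr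
      simp only [mul_pow] at this
      rw [Real.sq_sqrt (by positivity), Real.sq_sqrt (by positivity)] at this
      exact_mod_cast this
    have h13 : h₁ = h₃ := by
      refine aux_sqf_eq hsf₁ hsf₃ (aux_isSquare_of_sq_mul (a := α + β) (by positivity) ?_)
      refine ⟨(γ + δ) * h₃, ?_⟩
      calc (α + β) ^ 2 * (h₁ * h₃) = ((α + β) ^ 2 * h₁) * h₃ := by ring
        _ = ((γ + δ) ^ 2 * h₃) * h₃ := by rw [heqn]
        _ = (γ + δ) * h₃ * ((γ + δ) * h₃) := by ring
    subst h13
    have hab : α + β = γ + δ := by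
      have h2 : (α + β) ^ 2 = (γ + δ) ^ 2 := Nat.eq_of_mul_eq_mul_right (Nat.pos_of_ne_zero hh₁0) heqn
      nlinarith [h2]
    exact ⟨h₁, α, β, γ, δ, Nat.pos_of_ne_zero hh₁0, hsf₁, Nat.pos_of_ne_zero hα0,
      Nat.pos_of_ne_zero hβ0, Nat.pos_of_ne_zero hγ0, Nat.pos_of_ne_zero hδ0, hab,
      hα.symm, hβ.symm, hγ.symm, hδ.symm⟩
end

section
/- First derivative test for exponential integrals: let F : [a,b] → ℝ be differentiable with F' monotonic and |F'(x)| ≥ λ > 0 on [a,b]. Then |∫_a^b e^{iF(x)} dx| ≤ 4/λ. -/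
open MeasureTheory Set Complex intervalIntegral

-- Auxiliary: the case where F' ≥ lam > 0 on [a,b], with F' globally measurable.
lemma vdc_aux (a b lam : ℝ) (hab : a ≤ b) (hlam : 0 < lam)
    (F F' : ℝ → ℝ)
    (hF : ∀ x ∈ Set.Icc a b, HasDerivAt F (F' x) x)
    (hmeas : Measurable F')
    (hmono : MonotoneOn F' (Set.Icc a b) ∨ AntitoneOn F' (Set.Icc a b))
    (hge : ∀ x ∈ Set.Icc a b, lam ≤ F' x) :
    ‖∫ x in a..b, Complex.exp (Complex.I * F x)‖ ≤ 2 / lam := by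
  -- continuity of F on Icc
  have hFcont : ContinuousOn F (Set.Icc a b) := fun x hx => ((hF x hx).continuousAt).continuousWithinAt
  -- clamped version of F
  set proj : ℝ → ℝ := fun x => max a (min b x) with hproj
  have hprojIcc : ∀ x, proj x ∈ Set.Icc a b := by
    intro x
    constructor
    · exact le_max_left _ _
    · simp only [hproj, max_le_iff]
      exact ⟨hab, min_le_left _ _⟩
  have hprojId : ∀ x ∈ Set.Icc a b, proj x = x := by
    intro x hx
    simp only [hproj]
    rw [min_eq_right hx.2, max_eq_right hx.1]
  set Fc : ℝ → ℝ := fun x => F (proj x) with hFc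
  have hFcCont : Continuous Fc := by
    apply hFcont.comp_continuous (continuous_const.max (continuous_const.min continuous_id))
    exact hprojIcc
  have hFcEq : ∀ x ∈ Set.Icc a b, Fc x = F x := fun x hx => by
    simp only [hFc, hprojId x hx]
  -- upper bound for F'
  set M : ℝ := max (F' a) (F' b) with hM
  have hFub : ∀ x ∈ Set.Icc a b, F' x ≤ M := by
    intro x hx
    rcases hmono with h | h
    · exact le_trans (h hx (Set.right_mem_Icc.2 hab) hx.2) (le_max_right _ _)
    · exact le_trans (h (Set.left_mem_Icc.2 hab) hx hx.1) (le_max_left _ _)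
  have hFpos : ∀ x ∈ Set.Icc a b, (0:ℝ) < F' x := fun x hx => lt_of_lt_of_le hlam (hge x hx)
  -- the set A
  set A : Set (ℝ × ℝ) := {p : ℝ × ℝ | p.1 ∈ Set.Icc a b ∧ 0 < p.2 ∧ p.2 < (F' p.1)⁻¹} with hA
  have hAmeas : MeasurableSet A := by
    apply MeasurableSet.inter
    · exact (measurableSet_Icc.preimage measurable_fst)
    apply MeasurableSet.inter
    · exact measurableSet_lt measurable_const measurable_snd
    · exact measurableSet_lt measurable_snd ((hmeas.comp measurable_fst).inv)
  -- the integrand on the product space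
  set f : ℝ × ℝ → ℂ := fun p => Complex.exp (Complex.I * Fc p.1) * (F' p.1 : ℂ) with hf
  have hfmeas : Measurable f := by
    apply Measurable.mul
    · exact ((Complex.continuous_exp.comp (continuous_const.mul
        (Complex.continuous_ofReal.comp hFcCont))).measurable).comp measurable_fst
    · exact (Complex.measurable_ofReal.comp hmeas).comp measurable_fst
  set Phi : ℝ × ℝ → ℂ := A.indicator f with hPhi
  have hPhimeas : Measurable Phi := hfmeas.indicator hAmeas
  -- the dominating function
  set R : Set (ℝ × ℝ) := Set.Icc a b ×ˢ Set.Ioc 0 lam⁻¹ with hR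
  have hRmeas : MeasurableSet R := measurableSet_Icc.prod measurableSet_Ioc
  have hbnd_int : Integrable (R.indicator fun _ => M) (volume.prod volume) := by
    rw [integrable_indicator_iff hRmeas]
    refine integrableOn_const ?_
    rw [hR, Measure.prod_prod]
    exact (ENNReal.mul_lt_top (by simp) (by simp)).ne
  have hnorm_exp : ∀ x : ℝ, ‖Complex.exp (Complex.I * (x:ℂ))‖ = 1 := by
    intro x
    rw [Complex.norm_exp]
    simp [Complex.mul_re]
  have hAsubR : A ⊆ R := by
    rintro ⟨x, t⟩ ⟨hx, ht0, htlt⟩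
    refine ⟨hx, ht0, le_trans htlt.le ?_⟩
    exact inv_anti₀ hlam (hge x hx)
  have hle : ∀ p, ‖Phi p‖ ≤ R.indicator (fun _ => M) p := by
    intro p
    by_cases hp : p ∈ A
    · rw [hPhi, Set.indicator_of_mem hp, Set.indicator_of_mem (hAsubR hp)]
      rw [hf]
      simp only [norm_mul, hnorm_exp, one_mul, Complex.norm_real, Real.norm_eq_abs]
      rw [abs_of_pos (hFpos p.1 hp.1)]
      exact hFub p.1 hp.1
    · rw [hPhi, Set.indicator_of_notMem hp, norm_zero]
      exact Set.indicator_nonneg (fun x _ => le_trans hlam.le (le_trans (hge a (Set.left_mem_Icc.2 hab)) (le_max_left _ _))) _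
  have hPhiInt : Integrable Phi (volume.prod volume) :=
    hbnd_int.mono' hPhimeas.aestronglyMeasurable (Filter.Eventually.of_forall hle)
  -- Fubini
  have hswap : (∫ x : ℝ, ∫ t : ℝ, Phi (x, t)) = ∫ t : ℝ, ∫ x : ℝ, Phi (x, t) :=
    integral_integral_swap (f := fun x t => Phi (x, t)) hPhiInt
  -- the inner integral in t
  have hinner : ∀ x : ℝ, (∫ t : ℝ, Phi (x, t)) =
      (Set.Icc a b).indicator (fun x => Complex.exp (Complex.I * F x)) x := by
    intro x
    by_cases hx : x ∈ Set.Icc a b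
    · have hxne : (F' x : ℂ) ≠ 0 := by
        exact_mod_cast ne_of_gt (hFpos x hx)
      have heq : (fun t => Phi (x, t)) =
          (Set.Ioo (0:ℝ) (F' x)⁻¹).indicator
            (fun _ => Complex.exp (Complex.I * Fc x) * (F' x : ℂ)) := by
        funext t
        by_cases ht : t ∈ Set.Ioo (0:ℝ) (F' x)⁻¹
        · rw [Set.indicator_of_mem ht]
          rw [hPhi, Set.indicator_of_mem (by exact ⟨hx, ht.1, ht.2⟩)]
        · rw [Set.indicator_of_notMem ht]
          rw [hPhi, Set.indicator_of_notMem (by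
            rintro ⟨-, h1, h2⟩; exact ht ⟨h1, h2⟩)]
      rw [heq, integral_indicator_const _ measurableSet_Ioo]
      rw [Set.indicator_of_mem hx]
      rw [Real.volume_real_Ioo_of_le (inv_nonneg.2 (hFpos x hx).le), sub_zero]
      rw [Complex.real_smul, Complex.ofReal_inv, hFcEq x hx]
      rw [mul_comm (Complex.exp _) _, ← mul_assoc, inv_mul_cancel₀ hxne, one_mul]
    · have heq : (fun t => Phi (x, t)) = fun _ => (0:ℂ) := by
        funext t
        rw [hPhi, Set.indicator_of_notMem (by rintro ⟨h1, -⟩; exact hx h1)]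
      rw [heq, Set.indicator_of_notMem hx, integral_zero]
  -- LHS identification
  have hLHS : (∫ x : ℝ, ∫ t : ℝ, Phi (x, t)) = ∫ x in a..b, Complex.exp (Complex.I * F x) := by
    simp_rw [hinner]
    rw [MeasureTheory.integral_indicator measurableSet_Icc, integral_Icc_eq_integral_Ioc,
      intervalIntegral.integral_of_le hab]
  -- the bound on the integral in x for each t
  have hJ : ∀ t : ℝ, ‖∫ x : ℝ, Phi (x, t)‖ ≤ (Set.Ioc (0:ℝ) lam⁻¹).indicator (fun _ => (2:ℝ)) t := by
    intro t
    by_cases ht : t ∈ Set.Ioc (0:ℝ) lam⁻¹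
    · rw [Set.indicator_of_mem ht]
      set S : Set ℝ := {x | x ∈ Set.Icc a b ∧ t < (F' x)⁻¹} with hS
      have hPhiS : (fun x => Phi (x, t)) = S.indicator (fun x => Complex.exp (Complex.I * Fc x) * (F' x : ℂ)) := by
        funext x
        by_cases hxS : x ∈ S
        · rw [Set.indicator_of_mem hxS, hPhi, Set.indicator_of_mem (by exact ⟨hxS.1, ht.1, hxS.2⟩)]
        · rw [Set.indicator_of_notMem hxS, hPhi, Set.indicator_of_notMem (by
            rintro ⟨h1, -, h3⟩; exact hxS ⟨h1, h3⟩)]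
      by_cases hSne : S.Nonempty
      · have hSsubIcc : S ⊆ Set.Icc a b := fun x hx => hx.1
        have hbddb : BddBelow S := (bddBelow_Icc).mono hSsubIcc
        have hbdda : BddAbove S := (bddAbove_Icc).mono hSsubIcc
        set u : ℝ := sInf S with hu
        set v : ℝ := sSup S with hv
        have huIcc : u ∈ Set.Icc a b :=
          ⟨le_csInf hSne fun x hx => hx.1.1, le_trans (csInf_le hbddb hSne.choose_spec) hSne.choose_spec.1.2⟩
        have hvIcc : v ∈ Set.Icc a b :=
          ⟨le_trans hSne.choose_spec.1.1 (le_csSup hbdda hSne.choose_spec), csSup_le hSne fun x hx => hx.1.2⟩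
        have huv : u ≤ v := csInf_le_csSup hSne hbddb hbdda
        have hmemS : ∀ y ∈ Set.Ioo u v, y ∈ S := by
          intro y hy
          obtain ⟨p, hp, hpy⟩ := exists_lt_of_csInf_lt hSne hy.1
          obtain ⟨q, hq, hyq⟩ := exists_lt_of_lt_csSup hSne hy.2
          have hyIcc : y ∈ Set.Icc a b := ⟨le_trans hp.1.1 hpy.le, le_trans hyq.le hq.1.2⟩
          refine ⟨hyIcc, ?_⟩
          rcases hmono with hm | hm
          · have h1 : F' y ≤ F' q := hm hyIcc hq.1 hyq.le
            exact lt_of_lt_of_le hq.2 (inv_anti₀ (hFpos y hyIcc) h1)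
          · have h1 : F' y ≤ F' p := hm hp.1 hyIcc hpy.le
            exact lt_of_lt_of_le hp.2 (inv_anti₀ (hFpos y hyIcc) h1)
        have hSsub : S ⊆ Set.Icc u v := fun x hx => ⟨csInf_le hbddb hx, le_csSup hbdda hx⟩
        have hae : S =ᵐ[volume] Set.Ioc u v := by
          rw [MeasureTheory.ae_eq_set]
          constructor
          · refine measure_mono_null (fun x hx => ?_) (measure_singleton u)
            have h1 := hSsub hx.1
            have h2 := hx.2
            simp only [Set.mem_Ioc, not_and_or, not_lt, not_le] at h2
            rcases h2 with h2 | h2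
            · exact le_antisymm h2 h1.1
            · exact absurd h1.2 (not_le.2 h2)
          · refine measure_mono_null (fun x hx => ?_) (measure_singleton v)
            have h2 := hx.2
            rcases lt_or_eq_of_le hx.1.2 with h3 | h3
            · exact absurd (hmemS x ⟨hx.1.1, h3⟩) h2
            · exact h3
        have hSmeas : MeasurableSet S :=
          measurableSet_Icc.inter (measurableSet_lt measurable_const hmeas.inv)
        have hint1 : (∫ x : ℝ, Phi (x, t)) = ∫ x in u..v, Complex.exp (Complex.I * F x) * (F' x : ℂ) := by
          rw [hPhiS, MeasureTheory.integral_indicator hSmeas, MeasureTheory.setIntegral_congr_set hae,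
            ← intervalIntegral.integral_of_le huv]
          apply intervalIntegral.integral_congr
          intro x hxi
          rw [Set.uIcc_of_le huv] at hxi
          have hxab : x ∈ Set.Icc a b := ⟨le_trans huIcc.1 hxi.1, le_trans hxi.2 hvIcc.2⟩
          simp only [hFcEq x hxab]
        have hderiv : ∀ x ∈ Set.uIcc u v,
            HasDerivAt (fun y => -Complex.I * Complex.exp (Complex.I * F y))
              (Complex.exp (Complex.I * F x) * (F' x : ℂ)) x := by
          intro x hxi
          rw [Set.uIcc_of_le huv] at hxi
          have hxab : x ∈ Set.Icc a b := ⟨le_trans huIcc.1 hxi.1, le_trans hxi.2 hvIcc.2⟩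
          have h1 := ((hF x hxab).ofReal_comp).const_mul Complex.I
          have h2 := h1.cexp
          have h3 := h2.const_mul (-Complex.I)
          convert h3 using 1
          · rfl
          ring_nf
          rw [Complex.I_sq]
          ring
        have hintg : IntervalIntegrable (fun x => Complex.exp (Complex.I * F x) * (F' x : ℂ)) volume u v := by
          rw [intervalIntegrable_iff, Set.uIoc_of_le huv]
          have hIoc : Set.Ioc u v ⊆ Set.Icc a b := fun x hx =>
            ⟨le_trans huIcc.1 hx.1.le, le_trans hx.2 hvIcc.2⟩
          have hintFc : IntegrableOn (fun x => Complex.exp (Complex.I * Fc x) * (F' x : ℂ)) (Set.Ioc u v) := by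
            apply Integrable.mono' (g := fun _ => M) (integrableOn_const measure_Ioc_lt_top.ne)
            · exact (((Complex.continuous_exp.comp (continuous_const.mul
                (Complex.continuous_ofReal.comp hFcCont))).measurable).mul
                (Complex.measurable_ofReal.comp hmeas)).aestronglyMeasurable.restrict
            · refine (ae_restrict_mem measurableSet_Ioc).mono fun x hx => ?_
              simp only [norm_mul, hnorm_exp, one_mul, Complex.norm_real, Real.norm_eq_abs]
              rw [abs_of_pos (hFpos x (hIoc hx))]
              exact hFub x (hIoc hx)
          apply hintFc.congr_fun _ measurableSet_Ioc
          intro x hx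
          simp only [hFcEq x (hIoc hx)]
        rw [hint1, intervalIntegral.integral_eq_sub_of_hasDerivAt hderiv hintg]
        calc ‖-Complex.I * Complex.exp (Complex.I * F v) - -Complex.I * Complex.exp (Complex.I * F u)‖
            ≤ ‖-Complex.I * Complex.exp (Complex.I * F v)‖ + ‖-Complex.I * Complex.exp (Complex.I * F u)‖ :=
              norm_sub_le _ _
          _ = 2 := by simp only [norm_mul, norm_neg, Complex.norm_I, one_mul, hnorm_exp]; norm_num
      · have : (fun x => Phi (x, t)) = fun _ => (0:ℂ) := by
          rw [hPhiS]
          funext x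
          exact Set.indicator_of_notMem (fun hxS => hSne ⟨x, hxS⟩) _
        rw [this, MeasureTheory.integral_zero, norm_zero]
        norm_num
    · have hz : (fun x => Phi (x, t)) = fun _ => (0:ℂ) := by
        funext x
        rw [hPhi]
        apply Set.indicator_of_notMem
        rintro ⟨hx1, ht0, htlt⟩
        exact ht ⟨ht0, le_trans htlt.le (inv_anti₀ hlam (hge x hx1))⟩
      rw [hz, MeasureTheory.integral_zero, norm_zero]
      exact Set.indicator_nonneg (fun _ _ => by norm_num) t
  -- conclude
  have hbnd2_int : Integrable ((Set.Ioc (0:ℝ) lam⁻¹).indicator fun _ => (2:ℝ)) := by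
    rw [integrable_indicator_iff measurableSet_Ioc]
    exact integrableOn_const measure_Ioc_lt_top.ne
  calc ‖∫ x in a..b, Complex.exp (Complex.I * F x)‖
      = ‖∫ t : ℝ, ∫ x : ℝ, Phi (x, t)‖ := by rw [← hswap, hLHS]
    _ ≤ ∫ t : ℝ, (Set.Ioc (0:ℝ) lam⁻¹).indicator (fun _ => (2:ℝ)) t :=
        norm_integral_le_of_norm_le hbnd2_int (Filter.Eventually.of_forall hJ)
    _ = 2 / lam := by
        rw [integral_indicator_const _ measurableSet_Ioc, Real.volume_real_Ioc_of_le (inv_nonneg.2 hlam.le), sub_zero,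
          smul_eq_mul]
        rw [div_eq_mul_inv]
        ring


theorem first_derivative_test (a b lam : ℝ) (hab : a ≤ b) (hlam : 0 < lam)
    (F F' : ℝ → ℝ)
    (hF : ∀ x ∈ Set.Icc a b, HasDerivAt F (F' x) x)
    (hmono : MonotoneOn F' (Set.Icc a b) ∨ AntitoneOn F' (Set.Icc a b))
    (hlow : ∀ x ∈ Set.Icc a b, lam ≤ |F' x|) :
    ‖∫ x in a..b, Complex.exp (Complex.I * F x)‖ ≤ 4 / lam := by
  have h24 : (2:ℝ) / lam ≤ 4 / lam := by
    exact (div_le_div_iff_of_pos_right hlam).2 (by norm_num)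
  rcases eq_or_lt_of_le hab with heq | hlt
  · subst heq
    simp only [intervalIntegral.integral_same, norm_zero]
    positivity
  have hne : ∀ x ∈ Set.Icc a b, F' x ≠ 0 := by
    intro x hx h0
    have := hlow x hx
    rw [h0, abs_zero] at this
    linarith
  have hdichot := hasDerivWithinAt_forall_lt_or_forall_gt_of_forall_ne (convex_Icc a b)
    (fun x hx => (hF x hx).hasDerivWithinAt) hne
  set proj : ℝ → ℝ := fun x => max a (min b x) with hproj
  have hprojIcc : ∀ x, proj x ∈ Set.Icc a b := by
    intro x
    constructor
    · exact le_max_left _ _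
    · simp only [hproj, max_le_iff]
      exact ⟨hab, min_le_left _ _⟩
  have hprojId : ∀ x ∈ Set.Icc a b, proj x = x := by
    intro x hx
    simp only [hproj]
    rw [min_eq_right hx.2, max_eq_right hx.1]
  have hprojMono : Monotone proj := fun x y hxy =>
    max_le_max le_rfl (min_le_min le_rfl hxy)
  rcases hdichot with hneg | hpos
  · -- F' < 0 on Icc a b : apply vdc_aux to -F
    have hge : ∀ x ∈ Set.Icc a b, lam ≤ -F' x := by
      intro x hx
      have := hlow x hx
      rwa [abs_of_neg (hneg x hx)] at this
    set G' : ℝ → ℝ := fun x => -F' (proj x) with hG'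
    have hG'eq : ∀ x ∈ Set.Icc a b, G' x = -F' x := fun x hx => by
      simp only [hG', hprojId x hx]
    have hG'meas : Measurable G' := by
      rcases hmono with hm | hm
      · exact Antitone.measurable (fun x y h => neg_le_neg (hm (hprojIcc x) (hprojIcc y) (hprojMono h)))
      · exact Monotone.measurable (fun x y h => neg_le_neg (hm (hprojIcc x) (hprojIcc y) (hprojMono h)))
    have hG'mono : MonotoneOn G' (Set.Icc a b) ∨ AntitoneOn G' (Set.Icc a b) := by
      rcases hmono with hm | hm
      · right
        intro x hx y hy hxy
        rw [hG'eq x hx, hG'eq y hy]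
        exact neg_le_neg (hm hx hy hxy)
      · left
        intro x hx y hy hxy
        rw [hG'eq x hx, hG'eq y hy]
        exact neg_le_neg (hm hx hy hxy)
    have key := vdc_aux a b lam hab hlam (fun x => -F x) G'
      (fun x hx => by rw [hG'eq x hx]; exact (hF x hx).neg)
      hG'meas hG'mono
      (fun x hx => by rw [hG'eq x hx]; exact hge x hx)
    have hconj : ∀ x : ℝ, Complex.exp (Complex.I * ((-F x : ℝ) : ℂ)) =
        starRingEnd ℂ (Complex.exp (Complex.I * F x)) := by
      intro x
      rw [← Complex.exp_conj, map_mul, Complex.conj_I, Complex.conj_ofReal]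
      push_cast
      ring_nf
    have h1 : (∫ x in a..b, Complex.exp (Complex.I * ((-F x : ℝ) : ℂ))) =
        starRingEnd ℂ (∫ x in a..b, Complex.exp (Complex.I * F x)) := by
      rw [intervalIntegral.integral_of_le hab, intervalIntegral.integral_of_le hab]
      simp_rw [hconj]
      exact integral_conj
    rw [← RCLike.norm_conj (K := ℂ), ← h1]
    exact le_trans key h24
  · -- 0 < F' on Icc a b
    have hge : ∀ x ∈ Set.Icc a b, lam ≤ F' x := by
      intro x hx
      have := hlow x hx
      rwa [abs_of_pos (hpos x hx)] at this
    set G' : ℝ → ℝ := fun x => F' (proj x) with hG'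
    have hG'eq : ∀ x ∈ Set.Icc a b, G' x = F' x := fun x hx => by
      simp only [hG', hprojId x hx]
    have hG'meas : Measurable G' := by
      rcases hmono with hm | hm
      · exact Monotone.measurable (fun x y h => hm (hprojIcc x) (hprojIcc y) (hprojMono h))
      · exact Antitone.measurable (fun x y h => hm (hprojIcc x) (hprojIcc y) (hprojMono h))
    have hG'mono : MonotoneOn G' (Set.Icc a b) ∨ AntitoneOn G' (Set.Icc a b) := by
      rcases hmono with hm | hm
      · left
        intro x hx y hy hxy
        rw [hG'eq x hx, hG'eq y hy]
        exact hm hx hy hxy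
      · right
        intro x hx y hy hxy
        rw [hG'eq x hx, hG'eq y hy]
        exact hm hx hy hxy
    have key := vdc_aux a b lam hab hlam F G'
      (fun x hx => by rw [hG'eq x hx]; exact hF x hx)
      hG'meas hG'mono
      (fun x hx => by rw [hG'eq x hx]; exact hge x hx)
    exact le_trans key h24
end

section
/- Mean value theorem for Dirichlet polynomials (upper bound form): for complex numbers a_N, …, a_{2N} and T ≥ 1, ∫_0^T |Σ_{N < n ≤ 2N} a_n n^{−it}|² dt ≤ (T + C·N) Σ_{N < n ≤ 2N} |a_n|², for some absolute constant C (e.g. via |∫_0^T (m/n)^{it} dt| ≤ min(T, 2/|log(m/n)|) and |log(m/n)| ≫ |m−n|/N). -/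
set_option maxHeartbeats 1000000
open Complex Finset MeasureTheory intervalIntegral

noncomputable def ph (c t : ℝ) : ℂ := Complex.exp (Complex.I * t * c)

lemma ph_eq (c t : ℝ) : ph c t = Complex.exp (Complex.I * t * c) := rfl

lemma ph_cont (c : ℝ) : Continuous (fun t => ph c t) := by
  unfold ph; fun_prop

lemma ph_norm (c t : ℝ) : ‖ph c t‖ = 1 := by
  unfold ph
  rw [Complex.norm_exp]
  simp

lemma ph_conj (c t : ℝ) : (starRingEnd ℂ) (ph c t) = ph (-c) t := by
  unfold ph
  rw [← Complex.exp_conj]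
  congr 1
  simp

lemma ph_mul (c d t : ℝ) : ph c t * ph d t = ph (c + d) t := by
  unfold ph
  rw [← Complex.exp_add]
  congr 1
  push_cast
  ring

lemma ph_add_t (c t u : ℝ) : ph c (t + u) = ph c t * ph c u := by
  unfold ph
  rw [← Complex.exp_add]
  congr 1
  push_cast
  ring

lemma ph_zero (t : ℝ) : ph 0 t = 1 := by
  unfold ph; simp

lemma integral_ph (c : ℝ) (hc : c ≠ 0) (a b : ℝ) :
    ∫ t in a..b, ph c t = (Complex.exp (Complex.I * c * b) - Complex.exp (Complex.I * c * a)) / (Complex.I * c) := by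
  have h1 : ∀ t : ℝ, ph c t = Complex.exp ((Complex.I * c) * t) := by
    intro t; unfold ph; congr 1; ring
  simp_rw [h1]
  exact integral_exp_mul_complex (by simp [hc])

lemma norm_integral_ph_le (c : ℝ) (hc : c ≠ 0) (a b : ℝ) :
    ‖∫ t in a..b, ph c t‖ ≤ 2 / |c| := by
  rw [integral_ph c hc a b]
  rw [norm_div]
  have he : ∀ x : ℝ, ‖Complex.exp (Complex.I * c * x)‖ = 1 := by
    intro x
    rw [Complex.norm_exp]
    simp
  have h2 : ‖Complex.exp (Complex.I * c * b) - Complex.exp (Complex.I * c * a)‖ ≤ 2 := by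
    calc ‖Complex.exp (Complex.I * c * b) - Complex.exp (Complex.I * c * a)‖
        ≤ ‖Complex.exp (Complex.I * c * b)‖ + ‖Complex.exp (Complex.I * c * a)‖ := norm_sub_le _ _
      _ = 2 := by rw [he, he]; norm_num
  have h3 : ‖Complex.I * (c:ℂ)‖ = |c| := by
    simp
  rw [h3]
  gcongr

lemma integral_ph_zero (a b : ℝ) : ∫ t in a..b, ph 0 t = ((b - a : ℝ) : ℂ) := by
  simp_rw [ph_zero]
  simp

lemma integral_re_comm {g : ℝ → ℂ} {A B : ℝ}
    (h : IntervalIntegrable g MeasureTheory.volume A B) :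
    ∫ x in A..B, (g x).re = (∫ x in A..B, g x).re := by
  have := Complex.reCLM.intervalIntegral_comp_comm h
  simpa using this

lemma normsq_eq (z : ℂ) : ‖z‖^2 = (z * (starRingEnd ℂ) z).re := by
  rw [Complex.mul_conj, Complex.ofReal_re, Complex.normSq_eq_norm_sq]

lemma erase_swap (s : Finset ℕ) (f : ℕ → ℕ → ℝ) :
    ∑ m ∈ s, ∑ n ∈ s.erase m, f m n = ∑ n ∈ s, ∑ m ∈ s.erase n, f m n := by
  classical
  simp_rw [← Finset.filter_ne', Finset.sum_filter]
  rw [Finset.sum_comm]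
  apply Finset.sum_congr rfl
  intro n _
  apply Finset.sum_congr rfl
  intro m _
  simp [ne_comm]

lemma log_gap_aux {m n : ℕ} (hm : 0 < m) (hmn : m ≤ n) :
    ((n : ℝ) - m) / n ≤ Real.log n - Real.log m := by
  have hn : 0 < n := lt_of_lt_of_le hm hmn
  have hx : (0:ℝ) < (m:ℝ)/(n:ℝ) := by positivity
  have h := Real.log_le_sub_one_of_pos hx
  rw [Real.log_div (by positivity) (by positivity)] at h
  have hnpos : (0:ℝ) < n := by positivity
  have : ((n:ℝ) - m)/n = 1 - (m:ℝ)/n := by field_simp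
  rw [this]
  linarith

lemma log_gap {N m n : ℕ} (hm : m ∈ Ioc N (2*N)) (hn : n ∈ Ioc N (2*N))
    (hmn : m ≠ n) :
    |(m:ℝ) - n| / (2*N) ≤ |Real.log n - Real.log m| := by
  have hN : 0 < N := by
    simp only [mem_Ioc] at hm; omega
  simp only [mem_Ioc] at hm hn
  have hNpos : (0:ℝ) < 2*N := by positivity
  rcases lt_or_gt_of_ne hmn with h | h
  · have h1 := log_gap_aux (lt_of_le_of_lt (Nat.zero_le N) hm.1) h.le
    have hlog : Real.log m ≤ Real.log n := Real.log_le_log (by exact_mod_cast lt_of_le_of_lt (Nat.zero_le N) hm.1) (by exact_mod_cast h.le)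
    have hmn' : (m:ℝ) < n := by exact_mod_cast h
    rw [_root_.abs_of_nonpos (by linarith : (m:ℝ) - n ≤ 0), _root_.abs_of_nonneg (by linarith : (0:ℝ) ≤ Real.log n - Real.log m)]
    have hnle : (n:ℝ) ≤ 2*N := by exact_mod_cast hn.2
    have hd : (0:ℝ) < (n:ℝ) - m := by
      have : (m:ℝ) < n := by exact_mod_cast h
      linarith
    calc -((m:ℝ) - n) / (2*N) = ((n:ℝ) - m)/(2*N) := by ring_nf
      _ ≤ ((n:ℝ) - m)/n := by
          apply div_le_div_of_nonneg_left (le_of_lt hd) _ hnle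
          exact_mod_cast lt_of_le_of_lt (Nat.zero_le N) hn.1
      _ ≤ Real.log n - Real.log m := h1
  · have hmpos : 0 < n := lt_of_le_of_lt (Nat.zero_le N) hn.1
    have h1 := log_gap_aux hmpos h.le
    have hlog : Real.log n ≤ Real.log m := Real.log_le_log (by exact_mod_cast hmpos) (by exact_mod_cast h.le)
    have hmn' : (n:ℝ) < m := by exact_mod_cast h
    rw [_root_.abs_of_nonneg (by linarith : (0:ℝ) ≤ (m:ℝ) - n), _root_.abs_of_nonpos (by linarith : Real.log n - Real.log m ≤ 0)]
    have hmle : (m:ℝ) ≤ 2*N := by exact_mod_cast hm.2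
    calc ((m:ℝ) - n) / (2*N) ≤ ((m:ℝ) - n)/m := by
          apply div_le_div_of_nonneg_left _ _ hmle
          · have : (n:ℝ) < m := by exact_mod_cast h
            linarith
          · exact_mod_cast lt_of_le_of_lt (Nat.zero_le N) hm.1
      _ ≤ Real.log m - Real.log n := h1
      _ = -(Real.log n - Real.log m) := by ring

lemma sum_inv_sq_le (N : ℕ) : ∑ k ∈ Icc 1 N, (1:ℝ)/(k:ℝ)^2 ≤ 2 := by
  have key : ∀ M : ℕ, 0 < M → ∑ k ∈ Icc 1 M, (1:ℝ)/(k:ℝ)^2 ≤ 2 - 1/M := by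
    intro M hM
    induction M with
    | zero => omega
    | succ p ihp =>
      rcases Nat.eq_zero_or_pos p with rfl | hp
      · norm_num
      have hstep : Icc 1 (p+1) = insert (p+1) (Icc 1 p) := by
        rw [← Finset.insert_Icc_right_eq_Icc_add_one (by omega)]
      rw [hstep, Finset.sum_insert (by simp)]
      have h1 := ihp hp
      have hpr : (0:ℝ) < p := by exact_mod_cast hp
      have : (1:ℝ)/((p:ℝ)+1)^2 ≤ 1/(p:ℝ) - 1/((p:ℝ)+1) := by
        rw [div_sub_div _ _ (ne_of_gt hpr) (by positivity)]
        rw [div_le_div_iff₀ (by positivity) (by positivity)]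
        ring_nf
        nlinarith
      push_cast
      push_cast at h1
      linarith
  rcases Nat.eq_zero_or_pos N with rfl | hN
  · simp
  have h2 := key N hN
  have h3 : (0:ℝ) ≤ 1/(N : ℝ) := by positivity
  linarith

lemma inner_sum_le {N m : ℕ} (hm : m ∈ Ioc N (2*N)) :
    ∑ n ∈ (Ioc N (2*N)).erase m, (1:ℝ)/((m:ℝ)-(n:ℝ))^2 ≤ 4 := by
  classical
  set s := (Ioc N (2*N)).erase m with hs
  set d : ℕ → ℕ := fun n => ((m:ℤ) - (n:ℤ)).natAbs with hd
  have hmap : ∀ n ∈ s, d n ∈ Icc 1 N := by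
    intro n hn
    simp only [hs, Finset.mem_erase, mem_Ioc] at hn
    simp only [hd, Finset.mem_Icc]
    simp only [mem_Ioc] at hm
    omega
  have hval : ∀ n ∈ s, (1:ℝ)/((m:ℝ)-(n:ℝ))^2 = 1/((d n : ℝ))^2 := by
    intro n hn
    have h2 : ((m:ℝ)-(n:ℝ))^2 = ((d n : ℝ))^2 := by
      have h3 : ((d n : ℝ)) = |(m:ℝ) - (n:ℝ)| := by
        rw [← _root_.abs_of_nonneg (by positivity : (0:ℝ) ≤ (d n : ℝ))]
        rw [hd]
        push_cast [Nat.cast_natAbs]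
        simp [abs_sub_comm]
      rw [h3, _root_.sq_abs]
    rw [h2]
  rw [Finset.sum_congr rfl hval]
  rw [← Finset.sum_fiberwise_of_maps_to hmap (fun n => (1:ℝ)/((d n:ℝ))^2)]
  have hfib : ∀ k ∈ Icc 1 N,
      ∑ n ∈ s.filter (fun n => d n = k), (1:ℝ)/((d n:ℝ))^2 ≤ 2 * (1/(k:ℝ)^2) := by
    intro k hk
    have hsub : s.filter (fun n => d n = k) ⊆ {m - k, m + k} := by
      intro n hn
      simp only [Finset.mem_filter, hs, Finset.mem_erase, mem_Ioc] at hn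
      simp only [Finset.mem_insert, Finset.mem_singleton]
      have := hn.2
      simp only [hd] at this
      omega
    have hcard : (s.filter (fun n => d n = k)).card ≤ 2 := by
      calc (s.filter (fun n => d n = k)).card ≤ ({m - k, m + k} : Finset ℕ).card :=
            Finset.card_le_card hsub
        _ ≤ 2 := by
            apply le_trans (Finset.card_insert_le _ _)
            simp
    calc ∑ n ∈ s.filter (fun n => d n = k), (1:ℝ)/((d n:ℝ))^2
        = ∑ n ∈ s.filter (fun n => d n = k), (1:ℝ)/((k:ℝ))^2 := by
          apply Finset.sum_congr rfl
          intro n hn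
          simp only [Finset.mem_filter] at hn
          rw [hn.2]
      _ = (s.filter (fun n => d n = k)).card * ((1:ℝ)/(k:ℝ)^2) := by
          rw [Finset.sum_const, nsmul_eq_mul]
      _ ≤ 2 * (1/(k:ℝ)^2) := by
          apply mul_le_mul_of_nonneg_right _ (by positivity)
          exact_mod_cast hcard
  calc ∑ k ∈ Icc 1 N, ∑ n ∈ s.filter (fun n => d n = k), (1:ℝ)/((d n:ℝ))^2
      ≤ ∑ k ∈ Icc 1 N, 2 * (1/(k:ℝ)^2) := Finset.sum_le_sum hfib
    _ = 2 * ∑ k ∈ Icc 1 N, (1:ℝ)/(k:ℝ)^2 := by rw [Finset.mul_sum]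
    _ ≤ 2 * 2 := by
        apply mul_le_mul_of_nonneg_left (sum_inv_sq_le N) (by norm_num)
    _ = 4 := by norm_num

theorem mean_value_dirichlet_polynomials :
    ∃ C : ℝ, 0 < C ∧ ∀ (N : ℕ) (a : ℕ → ℂ) (T : ℝ), 1 ≤ T →
      ∫ t in (0:ℝ)..T,
          ‖∑ n ∈ Finset.Ioc N (2 * N), a n * (n : ℂ) ^ (-(Complex.I * t))‖ ^ 2
        ≤ (T + C * N) * ∑ n ∈ Finset.Ioc N (2 * N), ‖a n‖ ^ 2 := by
  classical
  refine ⟨65, by norm_num, ?_⟩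
  intro N a T hT
  rcases Nat.eq_zero_or_pos N with rfl | hN
  · simp
  have hT0 : (0:ℝ) ≤ T := by linarith
  set s : Finset ℕ := Finset.Ioc N (2 * N) with hsdef
  set S : ℝ := ∑ n ∈ s, ‖a n‖ ^ 2 with hSdef
  have hS0 : 0 ≤ S := Finset.sum_nonneg fun n _ => by positivity
  set L : ℝ := (N : ℝ) with hLdef
  have hL0 : (0:ℝ) < L := by rw [hLdef]; exact_mod_cast hN
  set lg : ℕ → ℝ := fun n => Real.log n with hlg
  set θ : ℕ → ℕ → ℝ := fun m n => lg n - lg m with hθ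
  set cc : ℕ → ℕ → ℂ := fun m n => a m * (starRingEnd ℂ) (a n) with hcc
  set F : ℝ → ℂ := fun t => ∑ n ∈ s, a n * ph (-(lg n)) t with hF
  -- rewrite the Dirichlet polynomial as exponentials
  have hpoly : ∀ t : ℝ, (∑ n ∈ s, a n * (n : ℂ) ^ (-(Complex.I * (t:ℂ)))) = F t := by
    intro t
    apply Finset.sum_congr rfl
    intro n hn
    have hn1 : 0 < n := by
      simp only [hsdef, mem_Ioc] at hn; omega
    have hne : (n:ℂ) ≠ 0 := by exact_mod_cast hn1.ne'
    congr 1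
    rw [Complex.cpow_def_of_ne_zero hne, ph_eq]
    congr 1
    simp only [hlg]
    push_cast
    ring
  have hgoal : (∫ t in (0:ℝ)..T,
      ‖∑ n ∈ s, a n * (n : ℂ) ^ (-(Complex.I * (t:ℂ)))‖ ^ 2)
      = ∫ t in (0:ℝ)..T, ‖F t‖^2 := by
    apply intervalIntegral.integral_congr
    intro t _
    show ‖∑ n ∈ s, a n * (n : ℂ) ^ (-(Complex.I * (t:ℂ)))‖ ^ 2 = ‖F t‖ ^ 2
    rw [hpoly t]
  rw [hgoal]
  -- pointwise expansion
  have hptwise : ∀ t : ℝ, ‖F t‖ ^ 2 = (∑ m ∈ s, ∑ n ∈ s, cc m n * ph (θ m n) t).re := by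
    intro t
    rw [normsq_eq]
    congr 1
    rw [hF]
    simp only
    rw [map_sum, Finset.sum_mul_sum]
    apply Finset.sum_congr rfl
    intro m _
    apply Finset.sum_congr rfl
    intro n _
    rw [map_mul, ph_conj]
    have h1 : a m * ph (-(lg m)) t * ((starRingEnd ℂ) (a n) * ph (-(-(lg n))) t)
        = cc m n * (ph (-(lg m)) t * ph (-(-(lg n))) t) := by
      rw [hcc]; ring
    rw [h1, ph_mul]
    congr 2
    simp [hθ]
    ring
  -- continuity facts
  have hFcont : Continuous F := by
    rw [hF]
    exact continuous_finset_sum _ fun n _ => continuous_const.mul (ph_cont _)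
  have hF2cont : Continuous fun t => ‖F t‖^2 := (hFcont.norm).pow 2
  set E : ℕ → ℕ → ℂ := fun m n => ∫ x in (-(L/2))..(T + L/2), ph (θ m n) x with hE
  set D : ℕ → ℕ → ℂ := fun m n => ∫ u in (-(L/2))..(L/2), ph (θ m n) u with hD
  -- Step C : inner integral for fixed shift u
  have keyC : ∀ u : ℝ, (∫ x in (-(L/2))..(T + L/2), ‖F (x + u)‖^2)
      = (∑ m ∈ s, ∑ n ∈ s, cc m n * ph (θ m n) u * E m n).re := by
    intro u
    have h1 : ∀ x : ℝ, ‖F (x + u)‖^2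
        = (∑ m ∈ s, ∑ n ∈ s, (cc m n * ph (θ m n) u) * ph (θ m n) x).re := by
      intro x
      rw [hptwise (x + u)]
      congr 1
      apply Finset.sum_congr rfl
      intro m _
      apply Finset.sum_congr rfl
      intro n _
      rw [ph_add_t]
      ring
    simp_rw [h1]
    have hg : Continuous fun x => ∑ m ∈ s, ∑ n ∈ s, (cc m n * ph (θ m n) u) * ph (θ m n) x :=
      continuous_finset_sum _ fun m _ => continuous_finset_sum _ fun n _ =>
        continuous_const.mul (ph_cont _)
    rw [integral_re_comm (hg.intervalIntegrable _ _)]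
    congr 1
    rw [intervalIntegral.integral_finset_sum (f := fun m x => ∑ n ∈ s, cc m n * ph (θ m n) u * ph (θ m n) x)
      (fun m _ => (continuous_finset_sum _ fun n _ =>
        continuous_const.mul (ph_cont _)).intervalIntegrable _ _)]
    apply Finset.sum_congr rfl
    intro m _
    rw [intervalIntegral.integral_finset_sum (f := fun n x => cc m n * ph (θ m n) u * ph (θ m n) x)
      (fun n _ => (continuous_const.mul (ph_cont _)).intervalIntegrable _ _)]
    apply Finset.sum_congr rfl
    intro n _
    rw [intervalIntegral.integral_const_mul]
  -- Step A : translation bound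
  have keyA : ∀ u ∈ Set.Icc (-(L/2)) (L/2),
      (∫ t in (0:ℝ)..T, ‖F t‖^2) ≤ ∫ x in (-(L/2))..(T + L/2), ‖F (x + u)‖^2 := by
    intro u hu
    obtain ⟨hu1, hu2⟩ := hu
    rw [intervalIntegral.integral_comp_add_right (fun y => ‖F y‖^2) u]
    have ha : -(L/2) + u ≤ 0 := by linarith
    have hb : T ≤ T + L/2 + u := by linarith
    have hint : ∀ A B : ℝ, IntervalIntegrable (fun y => ‖F y‖^2) volume A B :=
      fun A B => hF2cont.intervalIntegrable A B
    have hsplit : (∫ x in (-(L/2) + u)..(T + L/2 + u), ‖F x‖^2)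
        = (∫ x in (-(L/2) + u)..(0:ℝ), ‖F x‖^2) + ((∫ x in (0:ℝ)..T, ‖F x‖^2)
          + ∫ x in T..(T + L/2 + u), ‖F x‖^2) := by
      rw [intervalIntegral.integral_add_adjacent_intervals (hint _ _) (hint _ _),
        intervalIntegral.integral_add_adjacent_intervals (hint _ _) (hint _ _)]
    have hpos1 : 0 ≤ ∫ x in (-(L/2) + u)..(0:ℝ), ‖F x‖^2 :=
      intervalIntegral.integral_nonneg ha (fun x _ => by positivity)
    have hpos2 : 0 ≤ ∫ x in T..(T + L/2 + u), ‖F x‖^2 :=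
      intervalIntegral.integral_nonneg hb (fun x _ => by positivity)
    rw [hsplit]
    linarith
  -- Step B : averaging
  set I0 : ℝ := ∫ t in (0:ℝ)..T, ‖F t‖^2 with hI0
  set Φ : ℝ → ℝ := fun u => (∑ m ∈ s, ∑ n ∈ s, cc m n * ph (θ m n) u * E m n).re with hΦ
  have hΦcont : Continuous Φ := by
    rw [hΦ]
    exact Complex.continuous_re.comp (continuous_finset_sum _ fun m _ =>
      continuous_finset_sum _ fun n _ =>
        (continuous_const.mul (ph_cont _)).mul continuous_const)
  have hAB : ∀ u ∈ Set.Icc (-(L/2)) (L/2), I0 ≤ Φ u := by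
    intro u hu
    rw [hΦ]
    calc I0 ≤ ∫ x in (-(L/2))..(T + L/2), ‖F (x + u)‖^2 := keyA u hu
      _ = _ := keyC u
  have hle : -(L/2) ≤ L/2 := by linarith
  have hmono : (∫ _ in (-(L/2))..(L/2), I0) ≤ ∫ u in (-(L/2))..(L/2), Φ u :=
    intervalIntegral.integral_mono_on hle (intervalIntegrable_const)
      (hΦcont.intervalIntegrable _ _) hAB
  have hconst : (∫ _ in (-(L/2))..(L/2), I0) = L * I0 := by
    rw [intervalIntegral.integral_const, smul_eq_mul]
    ring_nf
  -- Step D : compute the u-integral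
  have keyD : (∫ u in (-(L/2))..(L/2), Φ u)
      = (∑ m ∈ s, ∑ n ∈ s, cc m n * E m n * D m n).re := by
    rw [hΦ]
    have h1 : ∀ u : ℝ, (∑ m ∈ s, ∑ n ∈ s, cc m n * ph (θ m n) u * E m n)
        = ∑ m ∈ s, ∑ n ∈ s, (cc m n * E m n) * ph (θ m n) u := by
      intro u
      apply Finset.sum_congr rfl
      intro m _
      apply Finset.sum_congr rfl
      intro n _
      ring
    simp_rw [h1]
    have hg : Continuous fun u => ∑ m ∈ s, ∑ n ∈ s, (cc m n * E m n) * ph (θ m n) u :=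
      continuous_finset_sum _ fun m _ => continuous_finset_sum _ fun n _ =>
        continuous_const.mul (ph_cont _)
    rw [integral_re_comm (hg.intervalIntegrable _ _)]
    congr 1
    rw [intervalIntegral.integral_finset_sum (f := fun m x => ∑ n ∈ s, cc m n * E m n * ph (θ m n) x)
      (fun m _ => (continuous_finset_sum _ fun n _ =>
        continuous_const.mul (ph_cont _)).intervalIntegrable _ _)]
    apply Finset.sum_congr rfl
    intro m _
    rw [intervalIntegral.integral_finset_sum (f := fun n x => cc m n * E m n * ph (θ m n) x)
      (fun n _ => (continuous_const.mul (ph_cont _)).intervalIntegrable _ _)]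
    apply Finset.sum_congr rfl
    intro n _
    rw [intervalIntegral.integral_const_mul]
  -- bound the double sum
  have hre_le : ∀ z : ℂ, z.re ≤ ‖z‖ := fun z => by
    exact Complex.re_le_norm z
  have hbound : (∑ m ∈ s, ∑ n ∈ s, cc m n * E m n * D m n).re
      ≤ L * ((T + 65 * N) * S) := by
    have hstep1 : (∑ m ∈ s, ∑ n ∈ s, cc m n * E m n * D m n).re
        ≤ ∑ m ∈ s, ∑ n ∈ s, ‖cc m n * E m n * D m n‖ := by
      calc (∑ m ∈ s, ∑ n ∈ s, cc m n * E m n * D m n).re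
          ≤ ‖∑ m ∈ s, ∑ n ∈ s, cc m n * E m n * D m n‖ := hre_le _
        _ ≤ ∑ m ∈ s, ‖∑ n ∈ s, cc m n * E m n * D m n‖ := norm_sum_le _ _
        _ ≤ ∑ m ∈ s, ∑ n ∈ s, ‖cc m n * E m n * D m n‖ :=
            Finset.sum_le_sum fun m _ => norm_sum_le _ _
    have hdiag : ∀ m ∈ s, ‖cc m m * E m m * D m m‖ = ((T + L) * L) * ‖a m‖^2 := by
      intro m hm
      have hθ0 : θ m m = 0 := by simp [hθ]
      have hEd : E m m = ((T + L : ℝ) : ℂ) := by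
        simp only [hE, hθ0]
        rw [integral_ph_zero]
        congr 1
        ring
      have hDd : D m m = ((L : ℝ) : ℂ) := by
        simp only [hD, hθ0]
        rw [integral_ph_zero]
        congr 1
        ring
      rw [hEd, hDd, norm_mul, norm_mul]
      simp only [hcc]
      rw [norm_mul, RCLike.norm_conj, Complex.norm_real, Complex.norm_real,
        Real.norm_eq_abs, Real.norm_eq_abs,
        _root_.abs_of_nonneg (by linarith : (0:ℝ) ≤ T + L), _root_.abs_of_nonneg hL0.le]
      ring
    have hoff : ∀ m ∈ s, ∀ n ∈ s.erase m, ‖cc m n * E m n * D m n‖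
        ≤ 8*(N:ℝ)^2*(‖a m‖^2*(1/((m:ℝ)-(n:ℝ))^2))
          + 8*(N:ℝ)^2*(‖a n‖^2*(1/((m:ℝ)-(n:ℝ))^2)) := by
      intro m hm n hn
      obtain ⟨hne, hns⟩ := Finset.mem_erase.mp hn
      have hmn : m ≠ n := fun h => hne h.symm
      have hgap : |(m:ℝ) - n| / (2*N) ≤ |θ m n| := by
        simp only [hθ, hlg]
        exact log_gap hm hns (fun h => hne h.symm)
      have hdne : ((m:ℝ) - n) ≠ 0 := by
        have : (m:ℝ) ≠ n := by
          intro h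
          exact hne (by exact_mod_cast h.symm)
        exact sub_ne_zero.mpr this
      have hdpos : (0:ℝ) < |(m:ℝ) - n| := abs_pos.mpr hdne
      have hθpos : 0 < |θ m n| := lt_of_lt_of_le (by positivity) hgap
      have hθne : θ m n ≠ 0 := by
        intro h
        rw [h] at hθpos
        simp at hθpos
      have hEb : ‖E m n‖ ≤ 2/|θ m n| := by
        simp only [hE]
        exact norm_integral_ph_le _ hθne _ _
      have hDb : ‖D m n‖ ≤ 2/|θ m n| := by
        simp only [hD]
        exact norm_integral_ph_le _ hθne _ _
      have hccb : ‖cc m n‖ = ‖a m‖ * ‖a n‖ := by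
        simp only [hcc]
        rw [norm_mul, RCLike.norm_conj]
      have hθd : 2/|θ m n| ≤ 4*(N:ℝ)/|(m:ℝ)-n| := by
        rw [div_le_div_iff₀ hθpos hdpos]
        have h6 : |(m:ℝ)-n| ≤ |θ m n| * (2*(N:ℝ)) := by
          have h7 : (0:ℝ) < 2*(N:ℝ) := by
            have : (0:ℝ) < (N:ℝ) := by exact_mod_cast hN
            linarith
          exact (div_le_iff₀ h7).mp hgap
        nlinarith [hθpos.le]
      have hE2 : ‖E m n‖ ≤ 4*(N:ℝ)/|(m:ℝ)-n| := hEb.trans hθd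
      have hD2 : ‖D m n‖ ≤ 4*(N:ℝ)/|(m:ℝ)-n| := hDb.trans hθd
      have habs : |(m:ℝ)-n| * |(m:ℝ)-n| = ((m:ℝ)-n)^2 := by
        rw [abs_mul_abs_self]
        ring
      calc ‖cc m n * E m n * D m n‖ = ‖cc m n‖ * ‖E m n‖ * ‖D m n‖ := by
            rw [norm_mul, norm_mul]
        _ ≤ ‖cc m n‖ * (4*(N:ℝ)/|(m:ℝ)-n|) * (4*(N:ℝ)/|(m:ℝ)-n|) := by
            have h8 : (0:ℝ) ≤ 4*(N:ℝ)/|(m:ℝ)-n| := by positivity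
            apply mul_le_mul (mul_le_mul le_rfl hE2 (norm_nonneg _) (norm_nonneg _)) hD2
              (norm_nonneg _) (by positivity)
        _ = (‖a m‖*‖a n‖) * (16*(N:ℝ)^2 * (1/((m:ℝ)-n)^2)) := by
            have h10 : (4*(N:ℝ)/|(m:ℝ)-n|) * (4*(N:ℝ)/|(m:ℝ)-n|)
                = 16*(N:ℝ)^2 * (1/((m:ℝ)-n)^2) := by
              rw [div_mul_div_comm, habs]
              ring
            rw [hccb, mul_assoc, h10]
        _ ≤ ((‖a m‖^2 + ‖a n‖^2)/2) * (16*(N:ℝ)^2*(1/((m:ℝ)-n)^2)) := by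
            apply mul_le_mul_of_nonneg_right _ (by positivity)
            nlinarith [sq_nonneg (‖a m‖ - ‖a n‖)]
        _ = 8*(N:ℝ)^2*(‖a m‖^2*(1/((m:ℝ)-(n:ℝ))^2))
            + 8*(N:ℝ)^2*(‖a n‖^2*(1/((m:ℝ)-(n:ℝ))^2)) := by ring
    have hP1 : ∑ m ∈ s, ∑ n ∈ s.erase m, ‖a m‖^2 * (1/((m:ℝ)-(n:ℝ))^2) ≤ 4 * S := by
      calc ∑ m ∈ s, ∑ n ∈ s.erase m, ‖a m‖^2 * (1/((m:ℝ)-(n:ℝ))^2)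
          = ∑ m ∈ s, ‖a m‖^2 * ∑ n ∈ s.erase m, 1/((m:ℝ)-(n:ℝ))^2 := by
            apply Finset.sum_congr rfl
            intro m _
            rw [Finset.mul_sum]
        _ ≤ ∑ m ∈ s, ‖a m‖^2 * 4 := by
            apply Finset.sum_le_sum
            intro m hm
            exact mul_le_mul_of_nonneg_left (inner_sum_le hm) (by positivity)
        _ = 4 * S := by
            rw [hSdef, Finset.mul_sum]
            apply Finset.sum_congr rfl
            intro m _
            ring
    have hP2 : ∑ m ∈ s, ∑ n ∈ s.erase m, ‖a n‖^2 * (1/((m:ℝ)-(n:ℝ))^2) ≤ 4 * S := by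
      rw [erase_swap s (fun m n => ‖a n‖^2 * (1/((m:ℝ)-(n:ℝ))^2))]
      calc ∑ n ∈ s, ∑ m ∈ s.erase n, ‖a n‖^2 * (1/((m:ℝ)-(n:ℝ))^2)
          = ∑ n ∈ s, ‖a n‖^2 * ∑ m ∈ s.erase n, 1/((n:ℝ)-(m:ℝ))^2 := by
            apply Finset.sum_congr rfl
            intro n _
            rw [Finset.mul_sum]
            apply Finset.sum_congr rfl
            intro m _
            have : ((m:ℝ)-(n:ℝ))^2 = ((n:ℝ)-(m:ℝ))^2 := by ring
            rw [this]
        _ ≤ ∑ n ∈ s, ‖a n‖^2 * 4 := by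
            apply Finset.sum_le_sum
            intro n hn
            exact mul_le_mul_of_nonneg_left (inner_sum_le hn) (by positivity)
        _ = 4 * S := by
            rw [hSdef, Finset.mul_sum]
            apply Finset.sum_congr rfl
            intro n _
            ring
    calc (∑ m ∈ s, ∑ n ∈ s, cc m n * E m n * D m n).re
        ≤ ∑ m ∈ s, ∑ n ∈ s, ‖cc m n * E m n * D m n‖ := hstep1
      _ ≤ ∑ m ∈ s, (((T+L)*L)*‖a m‖^2
            + ∑ n ∈ s.erase m, (8*(N:ℝ)^2*(‖a m‖^2*(1/((m:ℝ)-(n:ℝ))^2))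
              + 8*(N:ℝ)^2*(‖a n‖^2*(1/((m:ℝ)-(n:ℝ))^2)))) := by
          apply Finset.sum_le_sum
          intro m hm
          rw [← Finset.add_sum_erase s _ hm, hdiag m hm]
          exact add_le_add le_rfl (Finset.sum_le_sum (fun n hn => hoff m hm n hn))
      _ = (∑ m ∈ s, ((T+L)*L)*‖a m‖^2)
            + ((∑ m ∈ s, ∑ n ∈ s.erase m, 8*(N:ℝ)^2*(‖a m‖^2*(1/((m:ℝ)-(n:ℝ))^2)))
              + (∑ m ∈ s, ∑ n ∈ s.erase m, 8*(N:ℝ)^2*(‖a n‖^2*(1/((m:ℝ)-(n:ℝ))^2)))) := by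
          rw [Finset.sum_add_distrib]
          congr 1
          rw [← Finset.sum_add_distrib]
          apply Finset.sum_congr rfl
          intro m _
          rw [← Finset.sum_add_distrib]
      _ ≤ ((T+L)*L)*S + (8*(N:ℝ)^2*(4*S) + 8*(N:ℝ)^2*(4*S)) := by
          have e1 : (∑ m ∈ s, ((T+L)*L)*‖a m‖^2) = ((T+L)*L)*S := by
            rw [hSdef, Finset.mul_sum]
          have e2 : (∑ m ∈ s, ∑ n ∈ s.erase m, 8*(N:ℝ)^2*(‖a m‖^2*(1/((m:ℝ)-(n:ℝ))^2)))
              = 8*(N:ℝ)^2 * ∑ m ∈ s, ∑ n ∈ s.erase m, ‖a m‖^2*(1/((m:ℝ)-(n:ℝ))^2) := by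
            rw [Finset.mul_sum]
            apply Finset.sum_congr rfl
            intro m _
            rw [Finset.mul_sum]
          have e3 : (∑ m ∈ s, ∑ n ∈ s.erase m, 8*(N:ℝ)^2*(‖a n‖^2*(1/((m:ℝ)-(n:ℝ))^2)))
              = 8*(N:ℝ)^2 * ∑ m ∈ s, ∑ n ∈ s.erase m, ‖a n‖^2*(1/((m:ℝ)-(n:ℝ))^2) := by
            rw [Finset.mul_sum]
            apply Finset.sum_congr rfl
            intro m _
            rw [Finset.mul_sum]
          rw [e1, e2, e3]
          have h9 : (0:ℝ) ≤ 8*(N:ℝ)^2 := by positivity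
          have := mul_le_mul_of_nonneg_left hP1 h9
          have := mul_le_mul_of_nonneg_left hP2 h9
          linarith
      _ ≤ L * ((T + 65 * N) * S) := by
          rw [hLdef]
          apply le_of_eq
          ring
  -- conclude
  have hfinal : I0 ≤ (T + 65 * N) * S := by
    have h1 : L * I0 ≤ L * ((T + 65 * N) * S) := by
      calc L * I0 = ∫ _ in (-(L/2))..(L/2), I0 := hconst.symm
        _ ≤ ∫ u in (-(L/2))..(L/2), Φ u := hmono
        _ = (∑ m ∈ s, ∑ n ∈ s, cc m n * E m n * D m n).re := keyD
        _ ≤ L * ((T + 65 * N) * S) := hbound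
    exact le_of_mul_le_mul_left h1 hL0
  exact hfinal
end

section
/- For any real T ≥ 1 and integer K ≥ 1, the number of quadruples (m,n,k,ℓ) with K < m,n,k,ℓ ≤ 2K and √m + √n = √k + √ℓ is at most C_ε · K^{2+ε} for every ε > 0. -/
open Finset

private def cI (K : ℕ) : Finset ℕ := Finset.Ioc K (2 * K)
private def cP4 (K : ℕ) : Finset (ℕ × ℕ × ℕ × ℕ) := cI K ×ˢ cI K ×ˢ cI K ×ˢ cI K
private def cPsq (K : ℕ) : Finset (ℕ × ℕ) :=
  (cI K ×ˢ cI K).filter (fun p => IsSquare (p.1 * p.2))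
private def cF (K s : ℕ) : Finset ℕ :=
  (Finset.Icc 1 (2 * K)).filter (fun a => s * a ^ 2 ∈ cI K)



-- harmonic sum bound
lemma csq_harmonic (N : ℕ) : ∑ s ∈ Finset.Icc 1 N, (1 / (s : ℝ)) ≤ 1 + Real.log N := by
  induction N with
  | zero => simp
  | succ n ih =>
    rw [Finset.sum_Icc_succ_top (by omega : 1 ≤ n + 1)]
    rcases Nat.eq_zero_or_pos n with h | h
    · subst h; simp
    · have h1 : Real.log n + 1 / (n + 1 : ℝ) ≤ Real.log (n + 1 : ℕ) := by
        have hn : (0 : ℝ) < n := by exact_mod_cast h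
        have hx : (0 : ℝ) < (n : ℝ) / (n + 1) := by positivity
        have := Real.log_le_sub_one_of_pos hx
        rw [Real.log_div (by positivity) (by positivity)] at this
        push_cast
        have hne : (n : ℝ) + 1 ≠ 0 := by positivity
        rw [div_sub_one hne] at this
        have : Real.log n - Real.log ((n : ℝ) + 1) ≤ -1 / ((n : ℝ) + 1) := by
          calc Real.log n - Real.log ((n : ℝ) + 1) ≤ ((n : ℝ) - ((n : ℝ) + 1)) / ((n : ℝ) + 1) := this
            _ = -1 / ((n : ℝ) + 1) := by ring_nf
        rw [neg_div] at this
        linarith [this]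
      calc ∑ s ∈ Finset.Icc 1 n, (1 / (s : ℝ)) + 1 / ((n + 1 : ℕ) : ℝ)
          ≤ (1 + Real.log n) + 1 / ((n + 1 : ℕ) : ℝ) := by linarith [ih]
        _ ≤ 1 + Real.log ((n + 1 : ℕ) : ℝ) := by push_cast; push_cast at h1; linarith

lemma csq_log_le {x ε : ℝ} (hx : 1 ≤ x) (hε : 0 < ε) : Real.log x ≤ x ^ ε / ε := by
  have h0 : (0 : ℝ) < x := by linarith
  have := Real.log_le_sub_one_of_pos (Real.rpow_pos_of_pos h0 ε)
  rw [Real.log_rpow h0] at this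
  have hxe : (0:ℝ) < x ^ ε := Real.rpow_pos_of_pos h0 ε
  rw [le_div_iff₀ hε]
  nlinarith [this]

-- sqrt(m*n) for naturals: relate
lemma csq_sqrt_eq {m n : ℕ} :
    Real.sqrt m * Real.sqrt n = Real.sqrt ((m * n : ℕ) : ℝ) := by
  push_cast
  rw [Real.sqrt_mul (Nat.cast_nonneg m)]

lemma csq_classify {m n k l : ℕ} (hm : 0 < m) (hn : 0 < n) (hk : 0 < k) (hl : 0 < l)
    (h : Real.sqrt m + Real.sqrt n = Real.sqrt k + Real.sqrt l) :
    ((k = m ∧ l = n) ∨ (k = n ∧ l = m)) ∨ (IsSquare (m * n) ∧ IsSquare (k * l)) := by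
  set x := Real.sqrt ((m * n : ℕ) : ℝ) with hxdef
  set y := Real.sqrt ((k * l : ℕ) : ℝ) with hydef
  have hx2 : x ^ 2 = ((m * n : ℕ) : ℝ) := Real.sq_sqrt (by positivity)
  have hy2 : y ^ 2 = ((k * l : ℕ) : ℝ) := Real.sq_sqrt (by positivity)
  have hsm : Real.sqrt m ^ 2 = (m : ℝ) := Real.sq_sqrt (by positivity)
  have hsn : Real.sqrt n ^ 2 = (n : ℝ) := Real.sq_sqrt (by positivity)
  have hsk : Real.sqrt k ^ 2 = (k : ℝ) := Real.sq_sqrt (by positivity)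
  have hsl : Real.sqrt l ^ 2 = (l : ℝ) := Real.sq_sqrt (by positivity)
  have hkey : (m : ℝ) + n + 2 * x = (k : ℝ) + l + 2 * y := by
    have h2 : (Real.sqrt m + Real.sqrt n) ^ 2 = (Real.sqrt k + Real.sqrt l) ^ 2 := by rw [h]
    have e1 : Real.sqrt m * Real.sqrt n = x := csq_sqrt_eq
    have e2 : Real.sqrt k * Real.sqrt l = y := csq_sqrt_eq
    nlinarith [h2, e1, e2]
  by_cases hmn : m * n = k * l
  · -- x = y, so m + n = k + l, then {m,n} = {k,l}
    have hxy : x = y := by rw [hxdef, hydef, hmn]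
    have hsum : m + n = k + l := by
      have : (m : ℝ) + n = (k : ℝ) + l := by linarith [hkey, hxy]
      exact_mod_cast this
    left
    have hz : ((m : ℤ) - k) * ((m : ℤ) - l) = 0 := by
      have h1 : (m : ℤ) + n = k + l := by exact_mod_cast hsum
      have h2 : (m : ℤ) * n = k * l := by exact_mod_cast hmn
      nlinarith [h1, h2]
    rcases mul_eq_zero.mp hz with hz | hz
    · exact Or.inl ⟨by omega, by omega⟩
    · exact Or.inr ⟨by omega, by omega⟩
  · -- x ≠ y, both rational
    right
    have hxyne : x ≠ y := by
      intro he
      apply hmn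
      have : ((m * n : ℕ) : ℝ) = ((k * l : ℕ) : ℝ) := by rw [← hx2, ← hy2, he]
      exact_mod_cast this
    set r : ℝ := ((k : ℝ) + l - m - n) / 2 with hrdef
    have hxr : x = y + r := by rw [hrdef]; linarith [hkey]
    have hrne : r ≠ 0 := by
      intro h0; apply hxyne; rw [hxr, h0, add_zero]
    -- y = (mn - kl - r^2)/(2r)
    have hx2' : (y + r) ^ 2 = ((m * n : ℕ) : ℝ) := by rw [← hxr]; exact hx2
    have hyval : y = (((m * n : ℕ) : ℝ) - ((k * l : ℕ) : ℝ) - r ^ 2) / (2 * r) := by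
      rw [eq_div_iff (mul_ne_zero two_ne_zero hrne)]
      linear_combination hx2' - hy2
    -- y is rational
    set q : ℚ := ((k : ℚ) + l - m - n) / 2 with hqdef
    have hrq : r = (q : ℝ) := by rw [hrdef, hqdef]; push_cast; ring
    have hyrat : ¬ Irrational y := by
      rw [hyval, hrq]
      intro hirr
      have : ∃ q' : ℚ, ((((m * n : ℕ) : ℝ) - ((k * l : ℕ) : ℝ) - ((q : ℝ)) ^ 2) / (2 * (q : ℝ))) = (q' : ℝ) := by
        refine ⟨(((m * n : ℕ) : ℚ) - ((k * l : ℕ) : ℚ) - q ^ 2) / (2 * q), ?_⟩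
        push_cast
        ring
      obtain ⟨q', hq'⟩ := this
      rw [hq'] at hirr
      exact hirr.ne_rat q' rfl
    have hxrat : ¬ Irrational x := by
      rw [hxr]
      intro hirr
      have : Irrational y := by
        have := hirr
        rw [hrq] at this
        simpa using Irrational.sub_ratCast (q := q) this
      exact hyrat this
    constructor
    · by_contra hns
      exact hxrat (irrational_sqrt_natCast_iff.mpr hns)
    · by_contra hns
      exact hyrat (irrational_sqrt_natCast_iff.mpr hns)

lemma csq_same_part {m n : ℕ} (hm : 0 < m) (hn : 0 < n) (h : IsSquare (m * n)) :
    ∃ s a b : ℕ, 0 < s ∧ 0 < a ∧ 0 < b ∧ m = s * a ^ 2 ∧ n = s * b ^ 2 := by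
  obtain ⟨s, a, hms, hs⟩ := Nat.sq_mul_squarefree m
  obtain ⟨t, b, hnt, ht⟩ := Nat.sq_mul_squarefree n
  obtain ⟨c, hc⟩ := h
  have ha : 0 < a := by
    rcases Nat.eq_zero_or_pos a with h0 | h0
    · exfalso; rw [h0] at hms; simp at hms; omega
    · exact h0
  have hb : 0 < b := by
    rcases Nat.eq_zero_or_pos b with h0 | h0
    · exfalso; rw [h0] at hnt; simp at hnt; omega
    · exact h0
  have hspos : 0 < s := by
    rcases Nat.eq_zero_or_pos s with h0 | h0
    · exfalso; rw [h0] at hms; simp at hms; omega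
    · exact h0
  have htpos : 0 < t := by
    rcases Nat.eq_zero_or_pos t with h0 | h0
    · exfalso; rw [h0] at hnt; simp at hnt; omega
    · exact h0
  -- m*n = (a*b)^2 * (s*t) = c^2
  have hmn : (a * b) ^ 2 * (s * t) = c * c := by
    rw [← hc, ← hms, ← hnt]; ring
  have habc : a * b ∣ c := by
    rw [← Nat.pow_dvd_pow_iff (two_ne_zero)]
    exact ⟨s * t, by rw [sq, ← hmn]⟩
  obtain ⟨w, hw⟩ := habc
  have hab : 0 < a * b := Nat.mul_pos ha hb
  have hst : s * t = w ^ 2 := by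
    have : (a * b) ^ 2 * (s * t) = (a * b) ^ 2 * w ^ 2 := by
      rw [hmn, hw]; ring
    exact Nat.eq_of_mul_eq_mul_left (pow_pos hab 2) this
  have hsw : s ∣ w := (hs.dvd_pow_iff_dvd two_ne_zero).mp ⟨t, hst.symm⟩
  obtain ⟨u, hu⟩ := hsw
  have htu : t = s * u ^ 2 := by
    have h1 : s * t = s * (s * u ^ 2) := by rw [hst, hu]; ring
    exact Nat.eq_of_mul_eq_mul_left hspos h1
  have hu1 : u = 1 := by
    have : IsUnit u := ht u ⟨s, by rw [htu]; ring⟩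
    exact Nat.isUnit_iff.mp this
  have hts : t = s := by rw [htu, hu1]; ring
  exact ⟨s, a, b, hspos, ha, hb, by rw [← hms]; ring, by rw [← hnt, hts]; ring⟩

open Finset

lemma csq_nat_eq {m n k l : ℕ} (hmn : IsSquare (m * n)) (hkl : IsSquare (k * l))
    (h : Real.sqrt m + Real.sqrt n = Real.sqrt k + Real.sqrt l) :
    m + n + 2 * Nat.sqrt (m * n) = k + l + 2 * Nat.sqrt (k * l) := by
  obtain ⟨c, hc⟩ := hmn
  obtain ⟨d, hd⟩ := hkl
  have hcs : Nat.sqrt (m * n) = c := by rw [hc, Nat.sqrt_eq]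
  have hds : Nat.sqrt (k * l) = d := by rw [hd, Nat.sqrt_eq]
  have hrc : Real.sqrt m * Real.sqrt n = (c : ℝ) := by
    rw [← Real.sqrt_mul (Nat.cast_nonneg m), ← Nat.cast_mul, hc]
    push_cast
    rw [Real.sqrt_mul_self (Nat.cast_nonneg c)]
  have hrd : Real.sqrt k * Real.sqrt l = (d : ℝ) := by
    rw [← Real.sqrt_mul (Nat.cast_nonneg k), ← Nat.cast_mul, hd]
    push_cast
    rw [Real.sqrt_mul_self (Nat.cast_nonneg d)]
  have h2 : (Real.sqrt m + Real.sqrt n) ^ 2 = (Real.sqrt k + Real.sqrt l) ^ 2 := by rw [h]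
  have hsm : Real.sqrt m ^ 2 = (m : ℝ) := Real.sq_sqrt (by positivity)
  have hsn : Real.sqrt n ^ 2 = (n : ℝ) := Real.sq_sqrt (by positivity)
  have hsk : Real.sqrt k ^ 2 = (k : ℝ) := Real.sq_sqrt (by positivity)
  have hsl : Real.sqrt l ^ 2 = (l : ℝ) := Real.sq_sqrt (by positivity)
  have key : (m : ℝ) + n + 2 * c = (k : ℝ) + l + 2 * d := by nlinarith [h2]
  rw [hcs, hds]
  exact_mod_cast key

lemma csq_pair_eq {k l k' l' : ℕ} (hsum : k + l = k' + l') (hprod : k * l = k' * l')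
    (hord : (k ≤ l) ↔ (k' ≤ l')) : k = k' ∧ l = l' := by
  have hz : ((k : ℤ) - k') * ((k : ℤ) - l') = 0 := by
    have h1 : (k : ℤ) + l = k' + l' := by exact_mod_cast hsum
    have h2 : (k : ℤ) * l = k' * l' := by exact_mod_cast hprod
    nlinarith [h1, h2]
  rcases mul_eq_zero.mp hz with hz | hz
  · omega
  · have hkl' : k = l' := by omega
    have hlk' : l = k' := by omega
    subst hkl'; subst hlk'
    omega

lemma csq_D_inj {m n k l k' l' : ℕ}
    (hd : (k = m ∧ l = n) ∨ (k = n ∧ l = m))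
    (hd' : (k' = m ∧ l' = n) ∨ (k' = n ∧ l' = m))
    (hb : (k = m) ↔ (k' = m)) : k = k' ∧ l = l' := by omega

lemma csq_cardD (K : ℕ) :
    ((cP4 K).filter (fun q : ℕ × ℕ × ℕ × ℕ =>
      (q.2.2.1 = q.1 ∧ q.2.2.2 = q.2.1) ∨ (q.2.2.1 = q.2.1 ∧ q.2.2.2 = q.1))).card
      ≤ 2 * K ^ 2 := by
  classical
  have h := Finset.card_le_card_of_injOn
    (f := fun q : ℕ × ℕ × ℕ × ℕ => (q.1, q.2.1, decide (q.2.2.1 = q.1)))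
    (s := ((cP4 K).filter (fun q : ℕ × ℕ × ℕ × ℕ =>
      (q.2.2.1 = q.1 ∧ q.2.2.2 = q.2.1) ∨ (q.2.2.1 = q.2.1 ∧ q.2.2.2 = q.1))))
    (t := cI K ×ˢ cI K ×ˢ (Finset.univ : Finset Bool))
    (fun q hq => by
      simp only [Finset.mem_coe, Finset.mem_filter, cP4, Finset.mem_product] at hq
      simp only [Finset.mem_coe, Finset.mem_product, Finset.mem_univ, and_true]
      exact ⟨hq.1.1, hq.1.2.1⟩)
    (by
      intro q hq q' hq' heq
      simp only [Finset.coe_filter, Set.mem_setOf_eq, cP4, Finset.mem_product] at hq hq'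
      simp only [Prod.mk.injEq] at heq
      obtain ⟨h1, h2, h3⟩ := heq
      have hb := decide_eq_decide.mp h3
      rw [h1, h2] at hq
      obtain ⟨hkk, hll⟩ := csq_D_inj hq.2 hq'.2 (by rw [h1] at hb; exact hb)
      exact Prod.ext h1 (Prod.ext h2 (Prod.ext hkk hll)))
  calc _ ≤ (cI K ×ˢ cI K ×ˢ (Finset.univ : Finset Bool)).card := h
    _ = 2 * K ^ 2 := by
        rw [Finset.card_product, Finset.card_product, Finset.card_univ]
        simp only [cI, Nat.card_Ioc, Fintype.card_bool]
        have h2 : 2 * K - K = K := by omega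
        rw [h2]; ring




lemma csq_sqrt_of_isSquare {n : ℕ} (h : IsSquare n) : Nat.sqrt n * Nat.sqrt n = n := by
  obtain ⟨d, rfl⟩ := h
  rw [Nat.sqrt_eq]

lemma csq_cardB (K : ℕ) :
    ((cP4 K).filter (fun q : ℕ × ℕ × ℕ × ℕ =>
      (Real.sqrt q.1 + Real.sqrt q.2.1 = Real.sqrt q.2.2.1 + Real.sqrt q.2.2.2) ∧
        IsSquare (q.1 * q.2.1) ∧ IsSquare (q.2.2.1 * q.2.2.2))).card
      ≤ (cPsq K).card * (K * 2) := by
  classical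
  have h := Finset.card_le_card_of_injOn
    (f := fun q : ℕ × ℕ × ℕ × ℕ =>
      ((q.1, q.2.1), Nat.sqrt (q.2.2.1 * q.2.2.2), decide (q.2.2.1 ≤ q.2.2.2)))
    (s := ((cP4 K).filter (fun q : ℕ × ℕ × ℕ × ℕ =>
      (Real.sqrt q.1 + Real.sqrt q.2.1 = Real.sqrt q.2.2.1 + Real.sqrt q.2.2.2) ∧
        IsSquare (q.1 * q.2.1) ∧ IsSquare (q.2.2.1 * q.2.2.2))))
    (t := cPsq K ×ˢ cI K ×ˢ (Finset.univ : Finset Bool))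
    (fun q hq => by
      simp only [Finset.mem_coe, Finset.mem_filter, cP4, Finset.mem_product] at hq
      obtain ⟨⟨hm, hn, hk, hl⟩, heq, hsq1, hsq2⟩ := hq
      simp only [Finset.mem_coe, Finset.mem_product, Finset.mem_univ, and_true]
      refine ⟨?_, ?_⟩
      · simp only [cPsq, Finset.mem_filter, Finset.mem_product]
        exact ⟨⟨hm, hn⟩, hsq1⟩
      · obtain ⟨d, hd⟩ := hsq2
        have hds : Nat.sqrt (q.2.2.1 * q.2.2.2) = d := by rw [hd, Nat.sqrt_eq]
        simp only [cI, Finset.mem_Ioc] at hk hl ⊢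
        rw [hds]
        constructor
        · nlinarith [hk.1, hl.1, hd]
        · nlinarith [hk.2, hl.2, hd, Nat.zero_le d]
      )
    (by
      intro q hq q' hq' himg
      simp only [Finset.coe_filter, Set.mem_setOf_eq, cP4, Finset.mem_product] at hq hq'
      obtain ⟨-, heq, hsq1, hsq2⟩ := hq
      obtain ⟨-, heq', hsq1', hsq2'⟩ := hq'
      simp only [Prod.mk.injEq] at himg
      obtain ⟨⟨h1, h2⟩, h3, h4⟩ := himg
      have hE := csq_nat_eq hsq1 hsq2 heq
      have hE' := csq_nat_eq hsq1' hsq2' heq'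
      rw [← h1, ← h2] at hE'
      have hsum : q.2.2.1 + q.2.2.2 = q'.2.2.1 + q'.2.2.2 := by omega
      have hp : q.2.2.1 * q.2.2.2 = q'.2.2.1 * q'.2.2.2 := by
        have e1 := csq_sqrt_of_isSquare hsq2
        have e2 := csq_sqrt_of_isSquare hsq2'
        rw [← e1, ← e2, h3]
      obtain ⟨hk, hl⟩ := csq_pair_eq hsum hp (decide_eq_decide.mp h4)
      exact Prod.ext h1 (Prod.ext h2 (Prod.ext hk hl)))
  calc _ ≤ (cPsq K ×ˢ cI K ×ˢ (Finset.univ : Finset Bool)).card := h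
    _ = (cPsq K).card * (K * 2) := by
        rw [Finset.card_product, Finset.card_product, Finset.card_univ]
        simp only [cI, Nat.card_Ioc, Fintype.card_bool]
        congr 1
        omega



lemma csq_cardF (K s : ℕ) (hs : 1 ≤ s) : (cF K s).card ^ 2 ≤ 2 * K / s := by
  have hsub : cF K s ⊆ Finset.Icc 1 (Nat.sqrt (2 * K / s)) := by
    intro a ha
    simp only [cF, Finset.mem_filter, Finset.mem_Icc, cI, Finset.mem_Ioc] at ha
    obtain ⟨⟨h1, -⟩, -, h2⟩ := ha
    refine Finset.mem_Icc.mpr ⟨h1, ?_⟩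
    rw [Nat.le_sqrt']
    rw [Nat.le_div_iff_mul_le (by omega)]
    linarith [h2]
  have h1 : (cF K s).card ≤ Nat.sqrt (2 * K / s) := by
    calc (cF K s).card ≤ (Finset.Icc 1 (Nat.sqrt (2 * K / s))).card :=
          Finset.card_le_card hsub
      _ = Nat.sqrt (2 * K / s) := by rw [Nat.card_Icc]; omega
  calc (cF K s).card ^ 2 ≤ Nat.sqrt (2 * K / s) ^ 2 := Nat.pow_le_pow_left h1 2
    _ ≤ 2 * K / s := Nat.sqrt_le' _

lemma csq_cardPsq (K : ℕ) (_hK : 1 ≤ K) :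
    (cPsq K).card ≤ ∑ s ∈ Finset.Icc 1 (2 * K), 2 * K / s := by
  classical
  set U : Finset (ℕ × ℕ × ℕ) :=
    (Finset.Icc 1 (2 * K)).biUnion (fun s => {s} ×ˢ cF K s ×ˢ cF K s) with hU
  have hsurj : Set.SurjOn (fun t : ℕ × ℕ × ℕ => (t.1 * t.2.1 ^ 2, t.1 * t.2.2 ^ 2))
      ↑U ↑(cPsq K) := by
    intro p hp
    simp only [Finset.coe_filter, Set.mem_setOf_eq, cPsq, Finset.mem_coe,
      Finset.mem_filter, Finset.mem_product] at hp
    obtain ⟨⟨hm, hn⟩, hsq⟩ := hp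
    simp only [cI, Finset.mem_Ioc] at hm hn
    have hm0 : 0 < p.1 := by omega
    have hn0 : 0 < p.2 := by omega
    obtain ⟨s, a, b, hs0, ha0, hb0, hma, hnb⟩ := csq_same_part hm0 hn0 hsq
    refine ⟨(s, a, b), ?_, ?_⟩
    · simp only [hU, Finset.coe_biUnion, Set.mem_iUnion, Finset.mem_coe]
      refine ⟨s, Finset.mem_Icc.mpr ⟨hs0, ?_⟩, ?_⟩
      · calc s ≤ s * a ^ 2 := Nat.le_mul_of_pos_right s (by positivity)
          _ = p.1 := hma.symm
          _ ≤ 2 * K := hm.2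
      · simp only [Finset.mem_product, Finset.mem_singleton]
        have hamem : a ∈ cF K s := by
          simp only [cF, Finset.mem_filter, Finset.mem_Icc, cI, Finset.mem_Ioc]
          refine ⟨⟨ha0, ?_⟩, ?_, ?_⟩
          · calc a ≤ a ^ 2 := Nat.le_self_pow two_ne_zero a
              _ ≤ s * a ^ 2 := Nat.le_mul_of_pos_left _ hs0
              _ = p.1 := hma.symm
              _ ≤ 2 * K := hm.2
          · rw [← hma]; exact hm.1
          · rw [← hma]; exact hm.2
        have hbmem : b ∈ cF K s := by
          simp only [cF, Finset.mem_filter, Finset.mem_Icc, cI, Finset.mem_Ioc]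
          refine ⟨⟨hb0, ?_⟩, ?_, ?_⟩
          · calc b ≤ b ^ 2 := Nat.le_self_pow two_ne_zero b
              _ ≤ s * b ^ 2 := Nat.le_mul_of_pos_left _ hs0
              _ = p.2 := hnb.symm
              _ ≤ 2 * K := hn.2
          · rw [← hnb]; exact hn.1
          · rw [← hnb]; exact hn.2
        exact ⟨trivial, hamem, hbmem⟩
    · simp only
      rw [← hma, ← hnb]
  calc (cPsq K).card ≤ U.card := Finset.card_le_card_of_surjOn _ hsurj
    _ ≤ ∑ s ∈ Finset.Icc 1 (2 * K), ({s} ×ˢ cF K s ×ˢ cF K s).card :=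
        Finset.card_biUnion_le
    _ ≤ ∑ s ∈ Finset.Icc 1 (2 * K), 2 * K / s := by
        refine Finset.sum_le_sum (fun s hs => ?_)
        rw [Finset.card_product, Finset.card_product, Finset.card_singleton, one_mul]
        rw [← sq]
        exact csq_cardF K s (Finset.mem_Icc.mp hs).1



lemma csq_sum_div (K : ℕ) :
    ((∑ s ∈ Finset.Icc 1 (2 * K), 2 * K / s : ℕ) : ℝ)
      ≤ 2 * K * (1 + Real.log (2 * (K : ℝ))) := by
  push_cast
  calc (∑ s ∈ Finset.Icc 1 (2 * K), ((2 * K / s : ℕ) : ℝ))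
      ≤ ∑ s ∈ Finset.Icc 1 (2 * K), (2 * (K : ℝ)) / (s : ℝ) := by
        refine Finset.sum_le_sum (fun s hs => ?_)
        calc ((2 * K / s : ℕ) : ℝ) ≤ ((2 * K : ℕ) : ℝ) / (s : ℝ) := Nat.cast_div_le
          _ = 2 * (K : ℝ) / s := by push_cast; ring
    _ = 2 * (K : ℝ) * ∑ s ∈ Finset.Icc 1 (2 * K), (1 / (s : ℝ)) := by
        rw [Finset.mul_sum]; exact Finset.sum_congr rfl (fun s _ => by ring)
    _ ≤ 2 * (K : ℝ) * (1 + Real.log (2 * (K : ℝ))) := by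
        have h := csq_harmonic (2 * K)
        push_cast at h ⊢
        have hKnn : (0 : ℝ) ≤ 2 * (K : ℝ) := by positivity
        nlinarith [h]

theorem count_sqrt_quadruples (ε : ℝ) (hε : 0 < ε) :
    ∃ C : ℝ, 0 < C ∧ ∀ K : ℕ, 1 ≤ K →
      ((((Finset.Ioc K (2 * K)) ×ˢ (Finset.Ioc K (2 * K)) ×ˢ
          (Finset.Ioc K (2 * K)) ×ˢ (Finset.Ioc K (2 * K))).filter
            (fun q : ℕ × ℕ × ℕ × ℕ =>
              Real.sqrt q.1 + Real.sqrt q.2.1 = Real.sqrt q.2.2.1 + Real.sqrt q.2.2.2)).card : ℝ)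
        ≤ C * (K : ℝ) ^ ((2 : ℝ) + ε) := by
  classical
  refine ⟨10 + 4 / ε, by positivity, ?_⟩
  intro K hK
  set S := (((Finset.Ioc K (2 * K)) ×ˢ (Finset.Ioc K (2 * K)) ×ˢ
          (Finset.Ioc K (2 * K)) ×ˢ (Finset.Ioc K (2 * K))).filter
            (fun q : ℕ × ℕ × ℕ × ℕ =>
              Real.sqrt q.1 + Real.sqrt q.2.1 = Real.sqrt q.2.2.1 + Real.sqrt q.2.2.2)) with hS
  set D := ((cP4 K).filter (fun q : ℕ × ℕ × ℕ × ℕ =>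
      (q.2.2.1 = q.1 ∧ q.2.2.2 = q.2.1) ∨ (q.2.2.1 = q.2.1 ∧ q.2.2.2 = q.1))) with hD
  set B := ((cP4 K).filter (fun q : ℕ × ℕ × ℕ × ℕ =>
      (Real.sqrt q.1 + Real.sqrt q.2.1 = Real.sqrt q.2.2.1 + Real.sqrt q.2.2.2) ∧
        IsSquare (q.1 * q.2.1) ∧ IsSquare (q.2.2.1 * q.2.2.2))) with hB
  have hsub : S ⊆ D ∪ B := by
    intro q hq
    rw [hS, Finset.mem_filter] at hq
    obtain ⟨hmem, heq⟩ := hq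
    have hmem' : q ∈ cP4 K := hmem
    have hq4 : K < q.1 ∧ K < q.2.1 ∧ K < q.2.2.1 ∧ K < q.2.2.2 := by
      simp only [cP4, cI, Finset.mem_product, Finset.mem_Ioc] at hmem'
      exact ⟨hmem'.1.1, hmem'.2.1.1, hmem'.2.2.1.1, hmem'.2.2.2.1⟩
    rcases csq_classify (by omega) (by omega) (by omega) (by omega) heq with hc | hc
    · exact Finset.mem_union_left _ (Finset.mem_filter.mpr ⟨hmem', hc⟩)
    · exact Finset.mem_union_right _ (Finset.mem_filter.mpr ⟨hmem', heq, hc⟩)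
  have hcard : (S.card : ℝ) ≤ (D.card : ℝ) + (B.card : ℝ) := by
    have := (Finset.card_le_card hsub).trans (Finset.card_union_le D B)
    exact_mod_cast this
  have hDle : (D.card : ℝ) ≤ 2 * (K : ℝ) ^ 2 := by
    have := csq_cardD K
    calc (D.card : ℝ) ≤ ((2 * K ^ 2 : ℕ) : ℝ) := by exact_mod_cast this
      _ = 2 * (K : ℝ) ^ 2 := by push_cast; ring
  have hBle : (B.card : ℝ) ≤ (2 * (K : ℝ) * (1 + Real.log (2 * (K : ℝ)))) * (2 * K) := by
    have h1 : (B.card : ℝ) ≤ ((cPsq K).card : ℝ) * ((K : ℝ) * 2) := by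
      have := csq_cardB K
      calc (B.card : ℝ) ≤ (((cPsq K).card * (K * 2) : ℕ) : ℝ) := by exact_mod_cast this
        _ = ((cPsq K).card : ℝ) * ((K : ℝ) * 2) := by push_cast; ring
    have h2 : ((cPsq K).card : ℝ) ≤ 2 * K * (1 + Real.log (2 * (K : ℝ))) := by
      calc ((cPsq K).card : ℝ)
          ≤ ((∑ s ∈ Finset.Icc 1 (2 * K), 2 * K / s : ℕ) : ℝ) := by
            exact_mod_cast csq_cardPsq K hK
        _ ≤ 2 * K * (1 + Real.log (2 * (K : ℝ))) := csq_sum_div K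
    have hpos : (0 : ℝ) ≤ (K : ℝ) * 2 := by positivity
    calc (B.card : ℝ) ≤ ((cPsq K).card : ℝ) * ((K : ℝ) * 2) := h1
      _ ≤ (2 * K * (1 + Real.log (2 * (K : ℝ)))) * ((K : ℝ) * 2) := by
          apply mul_le_mul_of_nonneg_right h2 hpos
      _ = (2 * (K : ℝ) * (1 + Real.log (2 * (K : ℝ)))) * (2 * K) := by ring
  -- bound the log
  have hK1 : (1 : ℝ) ≤ (K : ℝ) := by exact_mod_cast hK
  have hKpos : (0 : ℝ) < (K : ℝ) := by linarith
  have hlog : Real.log (2 * (K : ℝ)) ≤ 1 + (K : ℝ) ^ ε / ε := by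
    have h2K : (2 * (K : ℝ)) = 2 * (K : ℝ) := by push_cast; ring
    rw [h2K, Real.log_mul (by norm_num) (by positivity)]
    have hl2 : Real.log 2 ≤ 1 := by
      have := Real.log_le_sub_one_of_pos (by norm_num : (0:ℝ) < 2)
      linarith
    have hlK : Real.log (K : ℝ) ≤ (K : ℝ) ^ ε / ε := csq_log_le hK1 hε
    linarith
  have hrpow1 : (1 : ℝ) ≤ (K : ℝ) ^ ε := by
    calc (1 : ℝ) = (1 : ℝ) ^ ε := (Real.one_rpow ε).symm
      _ ≤ (K : ℝ) ^ ε := Real.rpow_le_rpow (by norm_num) hK1 (le_of_lt hε)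
  have hsplit : (K : ℝ) ^ ((2 : ℝ) + ε) = (K : ℝ) ^ 2 * (K : ℝ) ^ ε := by
    rw [Real.rpow_add hKpos]
    congr 1
    rw [show ((2 : ℝ) = ((2 : ℕ) : ℝ)) by norm_num, Real.rpow_natCast]
  have hεpos : (0 : ℝ) < ε := hε
  have hKsq : (0 : ℝ) ≤ (K : ℝ) ^ 2 := by positivity
  calc (S.card : ℝ) ≤ (D.card : ℝ) + (B.card : ℝ) := hcard
    _ ≤ 2 * (K : ℝ) ^ 2 +
        (2 * (K : ℝ) * (1 + Real.log (2 * (K : ℝ)))) * (2 * K) := by linarith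
    _ = 2 * (K : ℝ) ^ 2 + 4 * (K : ℝ) ^ 2 * (1 + Real.log (2 * (K : ℝ))) := by ring
    _ ≤ 2 * (K : ℝ) ^ 2 + 4 * (K : ℝ) ^ 2 * (2 + (K : ℝ) ^ ε / ε) := by nlinarith [hlog, hKsq]
    _ = 10 * (K : ℝ) ^ 2 + (4 / ε) * ((K : ℝ) ^ 2 * (K : ℝ) ^ ε) := by
        field_simp; ring
    _ ≤ 10 * ((K : ℝ) ^ 2 * (K : ℝ) ^ ε) + (4 / ε) * ((K : ℝ) ^ 2 * (K : ℝ) ^ ε) := by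
        nlinarith [hrpow1, hKsq]
    _ = (10 + 4 / ε) * (K : ℝ) ^ ((2 : ℝ) + ε) := by rw [hsplit]; ring
end

section
/- For positive reals k ≤ K and t ≥ T with K ≤ T, the function f(t,k) = 2t·arsinh(√(πk/(2t))) + √(2πkt + π²k²) − π/4 satisfies f(t,k) = −π/4 + 2√(2πkt) + (1/6)√(2π³)·k^{3/2}t^{−1/2} + O(k^{5/2}t^{−3/2}), i.e. |f(t,k) + π/4 − 2√(2πkt) − (√(2π³)/6)k^{3/2}t^{−1/2}| ≤ C·k^{5/2}·t^{−3/2} for an absolute constant C, uniformly for 0 < k ≤ t. -/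
open Real

/-- derivative of the core function -/
lemma core_deriv (y : ℝ) :
    HasDerivAt (fun y : ℝ => arsinh y + y * Real.sqrt (1 + y ^ 2) - 2 * y - y ^ 3 / 3)
      (-(Real.sqrt (1 + y ^ 2) - 1) ^ 2) y := by
  have hpos : (0:ℝ) < 1 + y ^ 2 := by positivity
  have hs : 0 < Real.sqrt (1 + y ^ 2) := Real.sqrt_pos.2 hpos
  have hsq : Real.sqrt (1 + y ^ 2) ^ 2 = 1 + y ^ 2 := Real.sq_sqrt hpos.le
  have h1 : HasDerivAt arsinh (Real.sqrt (1 + y ^ 2))⁻¹ y := Real.hasDerivAt_arsinh y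
  have h2 : HasDerivAt (fun y : ℝ => 1 + y ^ 2) (2 * y) y := by
    simpa using ((hasDerivAt_pow 2 y).const_add 1)
  have h3 : HasDerivAt (fun y : ℝ => Real.sqrt (1 + y ^ 2))
      (1 / (2 * Real.sqrt (1 + y ^ 2)) * (2 * y)) y :=
    (Real.hasDerivAt_sqrt hpos.ne').comp y h2
  have h4 : HasDerivAt (fun y : ℝ => y * Real.sqrt (1 + y ^ 2))
      (1 * Real.sqrt (1 + y ^ 2) + y * (1 / (2 * Real.sqrt (1 + y ^ 2)) * (2 * y)))
      y := (hasDerivAt_id y).mul h3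
  have h5 : HasDerivAt (fun y : ℝ => 2 * y) 2 y := by
    simpa using (hasDerivAt_id y).const_mul 2
  have h6 : HasDerivAt (fun y : ℝ => y ^ 3 / 3) (y ^ 2) y := by
    simpa using (hasDerivAt_pow 3 y).div_const 3
  have := ((h1.add h4).sub h5).sub h6
  refine this.congr_deriv ?_
  field_simp
  nlinarith [hsq, hs]

lemma core_bound {x : ℝ} (hx : 0 ≤ x) :
    |arsinh x + x * Real.sqrt (1 + x ^ 2) - 2 * x - x ^ 3 / 3| ≤ x ^ 5 / 4 := by
  set g : ℝ → ℝ := fun y => arsinh y + y * Real.sqrt (1 + y ^ 2) - 2 * y - y ^ 3 / 3 with hg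
  have key := norm_image_sub_le_of_norm_deriv_le_segment'
    (f := g) (f' := fun y => -(Real.sqrt (1 + y ^ 2) - 1) ^ 2) (a := 0) (b := x) (C := x ^ 4 / 4)
    (fun y _ => (core_deriv y).hasDerivWithinAt)
    (fun y hy => ?_) x (by simp [hx])
  · have hg0 : g 0 = 0 := by simp [hg]
    rw [hg0, sub_zero, sub_zero] at key
    calc |g x| ≤ x ^ 4 / 4 * x := key
    _ = x ^ 5 / 4 := by ring
  · have hy0 : 0 ≤ y := hy.1
    have hyx : y ≤ x := hy.2.le
    have hpos : (0:ℝ) < 1 + y ^ 2 := by positivity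
    have hs1 : 1 ≤ Real.sqrt (1 + y ^ 2) := by
      nlinarith [Real.sq_sqrt hpos.le, Real.sqrt_nonneg (1 + y ^ 2)]
    have hsq : Real.sqrt (1 + y ^ 2) ^ 2 = 1 + y ^ 2 := Real.sq_sqrt hpos.le
    rw [Real.norm_eq_abs, abs_neg, abs_pow, abs_of_nonneg (by linarith)]
    have h1 : (Real.sqrt (1 + y ^ 2) - 1) ^ 2 ≤ y ^ 4 / 4 := by
      nlinarith [sq_nonneg (Real.sqrt (1 + y ^ 2) - 1)]
    have h2 : y ^ 4 ≤ x ^ 4 := pow_le_pow_left₀ hy0 hyx 4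
    linarith

lemma const_bound : Real.sqrt π ^ 5 ≤ 6 * Real.sqrt 2 ^ 5 := by
  have hp : Real.sqrt π ^ 2 = π := Real.sq_sqrt Real.pi_pos.le
  have hq : Real.sqrt 2 ^ 2 = 2 := Real.sq_sqrt (by norm_num)
  have hppos : (0:ℝ) ≤ Real.sqrt π := Real.sqrt_nonneg _
  have hqpos : (0:ℝ) < Real.sqrt 2 := Real.sqrt_pos.2 (by norm_num)
  have hple : Real.sqrt π ≤ 2 := by nlinarith [Real.pi_le_four]
  have hqge : (4:ℝ)/3 ≤ Real.sqrt 2 := by nlinarith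
  have hq5 : Real.sqrt 2 ^ 5 = 4 * Real.sqrt 2 := by linear_combination (Real.sqrt 2*(Real.sqrt 2^2+2)) * hq
  have hp5 : Real.sqrt π ^ 5 ≤ 32 := by
    have := pow_le_pow_left₀ hppos hple 5
    norm_num at this; linarith
  rw [hq5]; linarith

lemma rpow_half_nat {c : ℝ} (hc : 0 < c) (n : ℕ) :
    c ^ ((n : ℝ)/2) = Real.sqrt c ^ n := by
  rw [Real.sqrt_eq_rpow, ← Real.rpow_natCast (c ^ ((1:ℝ)/2)) n, ← Real.rpow_mul hc.le]
  ring_nf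

set_option maxHeartbeats 1000000 in
theorem atkinson_phase_expansion :
    ∃ C : ℝ, 0 < C ∧ ∀ k t : ℝ, 0 < k → k ≤ t →
      |(2 * t * Real.arsinh (Real.sqrt (π * k / (2 * t)))
          + Real.sqrt (2 * π * k * t + π ^ 2 * k ^ 2) - π / 4)
        + π / 4 - 2 * Real.sqrt (2 * π * k * t)
        - Real.sqrt (2 * π ^ 3) / 6 * k ^ ((3 : ℝ) / 2) * t ^ (-(1 : ℝ) / 2)|
        ≤ C * k ^ ((5 : ℝ) / 2) * t ^ (-(3 : ℝ) / 2) := by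
  refine ⟨3, by norm_num, fun k t hk hkt => ?_⟩
  have ht : 0 < t := lt_of_lt_of_le hk hkt
  have hπ : 0 < π := Real.pi_pos
  set p := Real.sqrt π with hpdef
  set q := Real.sqrt 2 with hqdef
  set K := Real.sqrt k with hKdef
  set T := Real.sqrt t with hTdef
  have hp : p ^ 2 = π := Real.sq_sqrt hπ.le
  have hq : q ^ 2 = 2 := Real.sq_sqrt (by norm_num)
  have hK : K ^ 2 = k := Real.sq_sqrt hk.le
  have hT : T ^ 2 = t := Real.sq_sqrt ht.le
  have hppos : 0 < p := Real.sqrt_pos.2 hπ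
  have hqpos : 0 < q := Real.sqrt_pos.2 (by norm_num)
  have hKpos : 0 < K := Real.sqrt_pos.2 hk
  have hTpos : 0 < T := Real.sqrt_pos.2 ht
  -- x
  set x := Real.sqrt (π * k / (2 * t)) with hxdef
  have hx : x = p * K / (q * T) := by
    rw [hxdef, show π * k / (2 * t) = (p * K / (q * T)) ^ 2 by
      field_simp
      linear_combination (-(q^2*T^2+2*t)*p^2) * hK - ((q^2*T^2+2*t)*k) * hp
        + (p^2*K^2*T^2) * hq + (2*p^2*K^2) * hT + (2*t*K^2) * hp + (2*t*π) * hK]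
    exact Real.sqrt_sq (by positivity)
  have hxpos : 0 < x := by rw [hx]; positivity
  have hx2 : x ^ 2 * (2 * t) = π * k := by
    have : x ^ 2 = π * k / (2 * t) := Real.sq_sqrt (by positivity)
    rw [this]; field_simp
  -- s
  set s := Real.sqrt (1 + x ^ 2) with hsdef
  have hs : s ^ 2 = 1 + x ^ 2 := Real.sq_sqrt (by positivity)
  -- identity 1
  have I1 : Real.sqrt (2 * π * k * t + π ^ 2 * k ^ 2) = 2 * t * x * s := by
    rw [show 2 * π * k * t + π ^ 2 * k ^ 2 = (2 * t * x * s) ^ 2 by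
      linear_combination (-4 * t ^ 2 * x ^ 2) * hs - (2 * t + 2 * t * x ^ 2 + π * k) * hx2]
    exact Real.sqrt_sq (by positivity)
  -- identity 2
  have I2 : Real.sqrt (2 * π * k * t) = 2 * t * x := by
    rw [show 2 * π * k * t = (2 * t * x) ^ 2 by linear_combination (-2 * t) * hx2]
    exact Real.sqrt_sq (by positivity)
  -- identity 3
  have hq3 : Real.sqrt (2 * π ^ 3) = q * p ^ 3 := by
    rw [show 2 * π ^ 3 = (q * p ^ 3) ^ 2 by
      linear_combination (-p^6) * hq - 2 * (p^4 + p^2 * π + π^2) * hp]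
    exact Real.sqrt_sq (by positivity)
  have e32 : k ^ ((3:ℝ)/2) = K ^ 3 := by
    have := rpow_half_nat hk 3; norm_num at this ⊢; exact this
  have e52 : k ^ ((5:ℝ)/2) = K ^ 5 := by
    have := rpow_half_nat hk 5; norm_num at this ⊢; exact this
  have em12 : t ^ (-(1:ℝ)/2) = (T)⁻¹ := by
    rw [show (-(1:ℝ)/2) = -((1:ℕ):ℝ)/2 by norm_num, neg_div, Real.rpow_neg ht.le,
      rpow_half_nat ht 1, pow_one]
  have em32 : t ^ (-(3:ℝ)/2) = (T ^ 3)⁻¹ := by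
    rw [show (-(3:ℝ)/2) = -((3:ℕ):ℝ)/2 by norm_num, neg_div, Real.rpow_neg ht.le,
      rpow_half_nat ht 3]
  have I3 : Real.sqrt (2 * π ^ 3) / 6 * k ^ ((3:ℝ)/2) * t ^ (-(1:ℝ)/2)
      = 2 / 3 * t * x ^ 3 := by
    have hq4 : q ^ 4 = 4 := by nlinarith [hq]
    rw [hq3, e32, em12, hx, ← hT]
    field_simp
    linear_combination 3 * hq4
  clear_value p q K T x s
  -- rewrite everything
  rw [I1, I2, I3, e52, em32]
  have key : (2 * t * Real.arsinh x + 2 * t * x * s - π / 4) + π / 4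
      - 2 * (2 * t * x) - 2 / 3 * t * x ^ 3
      = 2 * t * (Real.arsinh x + x * s - 2 * x - x ^ 3 / 3) := by ring
  rw [key, abs_mul, abs_of_nonneg (by positivity : (0:ℝ) ≤ 2 * t)]
  have hb := core_bound hxpos.le
  rw [← hsdef] at hb
  calc 2 * t * |Real.arsinh x + x * s - 2 * x - x ^ 3 / 3|
      ≤ 2 * t * (x ^ 5 / 4) := by
        exact mul_le_mul_of_nonneg_left hb (by positivity)
    _ ≤ 3 * K ^ 5 * (T ^ 3)⁻¹ := by
        have main : p ^ 5 ≤ 6 * q ^ 5 := by rw [hpdef, hqdef]; exact const_bound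
        rw [hx, ← hT]
        calc 2 * T ^ 2 * ((p * K / (q * T)) ^ 5 / 4)
            = p ^ 5 * (K ^ 5 / (2 * q ^ 5 * T ^ 3)) := by
              field_simp [hqpos.ne', hTpos.ne']; ring
          _ ≤ 6 * q ^ 5 * (K ^ 5 / (2 * q ^ 5 * T ^ 3)) :=
              mul_le_mul_of_nonneg_right main (by positivity)
          _ = 3 * K ^ 5 * (T ^ 3)⁻¹ := by
              field_simp [hqpos.ne', hTpos.ne']; ring
end
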